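/- arXiv:1503.01043 — 10 statements merged into one kernel-verified Lean document; each statement's English description precedes it below -/
import Mathlib

section
/- Let Φ be a root system with base Δ, W its Weyl group, and for S ⊆ Δ let Φ^rad(S) = Φ⁺ \ ℕ(Δ\S) be the set of positive roots that cannot be written as a nonnegative integer combination of the simple roots not in S. Then the stabilizer of Φ^rad(S) in W equals the standard parabolic subgroup W_{Δ\S} generated by the simple reflections s_α for α ∈ Δ\S. -/
set_option autoImplicit false

open Module
open scoped RealInnerProductSpace

set_option maxHeartbeats 1000000
set_option linter.unusedSectionVars false
set_option linter.unusedVariables false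

variable {V : Type*} [DecidableEq V] [NormedAddCommGroup V] [InnerProductSpace ℝ V] [FiniteDimensional ℝ V]

/-- The orthogonal reflection `s_α` in the hyperplane orthogonal to `α`, as a linear
automorphism of `V`. -/
noncomputable def simpleReflection (α : V) : V ≃ₗ[ℝ] V :=
  (Submodule.reflection ((Submodule.span ℝ {α})ᗮ)).toLinearEquiv

/-- `x` is a nonnegative integer combination of the elements of `Δ`. -/
def IsNNComb (Δ : Finset V) (x : V) : Prop :=
  ∃ c : V → ℕ, x = ∑ a ∈ Δ, (c a : ℝ) • a

/-- The positive roots of `Φ` with respect to the base `Δ`. -/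
def posRoots (Φ : Set V) (Δ : Finset V) : Set V := {γ ∈ Φ | IsNNComb Δ γ}

/-- `Φ^rad(S)`: the positive roots that are not nonnegative integer combinations of the
simple roots not in `S`. -/
def phiRad (Φ : Set V) (Δ S : Finset V) : Set V :=
  {γ ∈ posRoots Φ Δ | ¬ IsNNComb (Δ \ S) γ}

/-- The subgroup of `GL(V)` generated by the reflections `s_α` for `α ∈ I`; for `I = Δ`
this is the Weyl group `W`, and for `I ⊆ Δ` it is the standard parabolic subgroup `W_I`. -/
noncomputable def weylSubgroup (I : Finset V) : Subgroup (V ≃ₗ[ℝ] V) :=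
  Subgroup.closure {w | ∃ α ∈ I, w = simpleReflection α}

lemma mulApp (e₁ e₂ : V ≃ₗ[ℝ] V) (x : V) : (e₁ * e₂) x = e₁ (e₂ x) := rfl

lemma simpleReflection_apply (α x : V) :
    simpleReflection α x = x - (2 * ⟪α, x⟫ / ‖α‖ ^ 2) • α := by
  show Submodule.reflection ((Submodule.span ℝ {α})ᗮ) x = _
  rw [Submodule.reflection_apply, Submodule.starProjection_orthogonal_val,
    Submodule.starProjection_singleton]
  simp only [RCLike.ofReal_real_eq_id, id_eq]
  module

lemma simpleReflection_inner (α x y : V) :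
    ⟪simpleReflection α x, simpleReflection α y⟫ = ⟪x, y⟫ :=
  (Submodule.reflection ((Submodule.span ℝ {α})ᗮ)).inner_map_map x y

lemma simpleReflection_involutive (α x : V) :
    simpleReflection α (simpleReflection α x) = x :=
  Submodule.reflection_reflection _ x

lemma simpleReflection_mul_self (α : V) : simpleReflection α * simpleReflection α = 1 :=
  LinearEquiv.ext fun x => simpleReflection_involutive α x

lemma simpleReflection_inv (α : V) : (simpleReflection α)⁻¹ = simpleReflection α :=
  inv_eq_of_mul_eq_one_right (simpleReflection_mul_self α)

lemma simpleReflection_apply_self (α : V) : simpleReflection α α = -α := by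
  by_cases h : α = 0
  · simp [h, simpleReflection_apply]
  · rw [simpleReflection_apply, real_inner_self_eq_norm_sq]
    have hn : ‖α‖ ^ 2 ≠ 0 := pow_ne_zero _ (norm_ne_zero_iff.mpr h)
    rw [show 2 * ‖α‖ ^ 2 / ‖α‖ ^ 2 = 2 by field_simp]
    rw [two_smul]; abel

/-- Uniqueness of real coefficients over a linearly independent finset. -/
lemma coeff_unique {Δ : Finset V} (hind : LinearIndependent ℝ (fun a : Δ => (a : V)))
    {c d : V → ℝ} (h : ∑ a ∈ Δ, c a • a = ∑ a ∈ Δ, d a • a) :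
    ∀ a ∈ Δ, c a = d a := by
  have h2 : ∑ a ∈ Δ, (c a - d a) • a = 0 := by
    simp only [sub_smul, Finset.sum_sub_distrib, h, sub_self]
  have h3 : ∑ a : Δ, (fun a : Δ => c a.1 - d a.1) a • (a : V) = 0 := by
    rw [Finset.univ_eq_attach, Finset.sum_attach Δ (fun a => (c a - d a) • a)] at *
    exact h2
  intro a ha
  have := linearIndependent_iff'.mp hind Finset.univ (fun a : Δ => c a.1 - d a.1) h3
    ⟨a, ha⟩ (Finset.mem_univ _)
  simpa [sub_eq_zero] using this

lemma single_comb {Δ : Finset V} {α : V} (hα : α ∈ Δ) (t : ℝ) :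
    t • α = ∑ a ∈ Δ, (if a = α then t else 0) • a := by
  simp only [ite_smul, zero_smul, Finset.sum_ite_eq' Δ α, hα, if_true]

lemma mem_posRoots_of_mem_base {Φ : Set V} {Δ : Finset V} (hΔΦ : ↑Δ ⊆ Φ) {α : V}
    (hα : α ∈ Δ) : α ∈ posRoots Φ Δ := by
  refine ⟨hΔΦ hα, fun a => if a = α then 1 else 0, ?_⟩
  simp only [Nat.cast_ite, Nat.cast_one, Nat.cast_zero]
  rw [← single_comb hα (1:ℝ), one_smul]

/-- A vector cannot be a nonneg combination together with its negation, unless zero. -/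
lemma eq_zero_of_nncomb_and_neg {Δ : Finset V}
    (hind : LinearIndependent ℝ (fun a : Δ => (a : V))) {x : V}
    (h1 : IsNNComb Δ x) (h2 : IsNNComb Δ (-x)) : x = 0 := by
  obtain ⟨c, hc⟩ := h1
  obtain ⟨d, hd⟩ := h2
  have h : ∑ a ∈ Δ, ((c a : ℝ) + (d a : ℝ)) • a = ∑ a ∈ Δ, (0 : ℝ) • a := by
    simp only [add_smul, Finset.sum_add_distrib, ← hc, ← hd, add_neg_cancel]
    simp
  have := coeff_unique hind h
  have hc0 : ∀ a ∈ Δ, (c a : ℝ) = 0 := by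
    intro a ha
    have := this a ha
    have h1 : (0:ℝ) ≤ c a := Nat.cast_nonneg _
    have h2 : (0:ℝ) ≤ d a := Nat.cast_nonneg _
    linarith
  rw [hc, Finset.sum_congr rfl (fun a ha => by rw [hc0 a ha, zero_smul])]
  simp

/-- A positive root lying in the span of a simple root is a positive natural multiple of it. -/
lemma posRoot_in_span {Φ : Set V} {Δ : Finset V} (h0 : (0 : V) ∉ Φ)
    (hind : LinearIndependent ℝ (fun a : Δ => (a : V))) {α γ : V} (hα : α ∈ Δ)
    (hγ : γ ∈ posRoots Φ Δ) (hsp : γ ∈ Submodule.span ℝ {α}) :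
    ∃ c : ℕ, 0 < c ∧ γ = (c : ℝ) • α := by
  obtain ⟨t, ht⟩ := Submodule.mem_span_singleton.mp hsp
  obtain ⟨hγΦ, c, hc⟩ := hγ
  have h : ∑ a ∈ Δ, (if a = α then t else 0) • a = ∑ a ∈ Δ, (c a : ℝ) • a := by
    rw [← single_comb hα t, ht, hc]
  have hcoef := coeff_unique hind h
  refine ⟨c α, ?_, ?_⟩
  · rcases Nat.eq_zero_or_pos (c α) with h0' | h
    · exfalso
      have hγ0 : γ = 0 := by
        rw [← ht, ← (by simp : (if α = α then t else 0) = t), hcoef α hα, h0']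
        simp
      exact h0 (hγ0 ▸ hγΦ)
    · exact h
  · rw [← ht]
    have : t = (c α : ℝ) := by simpa using hcoef α hα
    rw [this]

lemma simpleReflection_mem_weyl {I : Finset V} {α : V} (hα : α ∈ I) :
    simpleReflection α ∈ weylSubgroup I :=
  Subgroup.subset_closure ⟨α, hα, rfl⟩

lemma weyl_mono {I J : Finset V} (h : I ⊆ J) : weylSubgroup I ≤ weylSubgroup J := by
  apply Subgroup.closure_mono
  rintro w ⟨α, hα, rfl⟩
  exact ⟨α, h hα, rfl⟩

/-- Every element of the Weyl group preserves the inner product. -/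
lemma weyl_inner {I : Finset V} {w : V ≃ₗ[ℝ] V} (hw : w ∈ weylSubgroup I) :
    ∀ x y : V, ⟪w x, w y⟫ = ⟪x, y⟫ := by
  induction hw using Subgroup.closure_induction with
  | mem w hw =>
    obtain ⟨α, _, rfl⟩ := hw
    exact simpleReflection_inner α
  | one => intro x y; rfl
  | mul u v hu hv hiu hiv =>
    intro x y
    rw [mulApp, mulApp, hiu, hiv]
  | inv u hu hiu =>
    intro x y
    have := hiu (u⁻¹ x) (u⁻¹ y)
    rw [show u (u⁻¹ x) = x from u.apply_symm_apply x,
      show u (u⁻¹ y) = y from u.apply_symm_apply y] at this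
    exact this.symm

/-- Conjugation of a reflection by an inner-product-preserving automorphism. -/
lemma conj_reflection {w : V ≃ₗ[ℝ] V} (hw : ∀ x y : V, ⟪w x, w y⟫ = ⟪x, y⟫) (β : V) :
    w * simpleReflection β * w⁻¹ = simpleReflection (w β) := by
  apply LinearEquiv.ext
  intro x
  rw [mulApp, mulApp, simpleReflection_apply, simpleReflection_apply, map_sub, map_smul]
  have h1 : w (w⁻¹ x) = x := w.apply_symm_apply x
  have h2 : ⟪β, w⁻¹ x⟫ = ⟪w β, x⟫ := by rw [← hw β (w⁻¹ x), h1]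
  have h3 : ‖β‖ ^ 2 = ‖w β‖ ^ 2 := by
    have := hw β β
    rw [real_inner_self_eq_norm_sq, real_inner_self_eq_norm_sq] at this
    linarith
  rw [h1, h2, h3]

/-- Reflection in a nonzero multiple. -/
lemma simpleReflection_smul {α : V} {t : ℝ} (ht : t ≠ 0) :
    simpleReflection (t • α) = simpleReflection α := by
  by_cases hα : α = 0
  · simp [hα]
  apply LinearEquiv.ext
  intro x
  rw [simpleReflection_apply, simpleReflection_apply]
  rw [real_inner_smul_left, norm_smul, mul_pow, smul_smul, Real.norm_eq_abs, sq_abs]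
  have h1 : ‖α‖ ^ 2 ≠ 0 := pow_ne_zero _ (norm_ne_zero_iff.mpr hα)
  have hc : 2 * (t * inner ℝ α x) / (t ^ 2 * ‖α‖ ^ 2) * t = 2 * (inner ℝ α x : ℝ) / ‖α‖ ^ 2 := by
    field_simp
  rw [hc]

lemma prod_reverse_inv (l : List V) :
    (l.map simpleReflection).prod⁻¹ = (l.reverse.map simpleReflection).prod := by
  induction l with
  | nil => simp
  | cons b l ih =>
    simp only [List.map_cons, List.prod_cons, mul_inv_rev, List.reverse_cons,
      List.map_append, List.prod_append, List.map_nil, List.prod_nil, List.prod_cons]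
    rw [ih, simpleReflection_inv]
    simp

/-- Every element of the Weyl group is a product of simple reflections. -/
lemma weyl_word {I : Finset V} {w : V ≃ₗ[ℝ] V} (hw : w ∈ weylSubgroup I) :
    ∃ l : List V, (∀ a ∈ l, a ∈ I) ∧ w = (l.map simpleReflection).prod := by
  induction hw using Subgroup.closure_induction with
  | mem w hw =>
    obtain ⟨α, hα, rfl⟩ := hw
    exact ⟨[α], by simpa using hα, by simp⟩
  | one => exact ⟨[], by simp, by simp⟩
  | mul u v _ _ hiu hiv =>
    obtain ⟨l1, h1, rfl⟩ := hiu
    obtain ⟨l2, h2, rfl⟩ := hiv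
    refine ⟨l1 ++ l2, ?_, by simp⟩
    intro a ha
    rcases List.mem_append.mp ha with h | h
    · exact h1 a h
    · exact h2 a h
  | inv u _ hiu =>
    obtain ⟨l, hl, rfl⟩ := hiu
    exact ⟨l.reverse, fun a ha => hl a (List.mem_reverse.mp ha), prod_reverse_inv l⟩

lemma word_mem {I : Finset V} {l : List V} (hl : ∀ a ∈ l, a ∈ I) :
    (l.map simpleReflection).prod ∈ weylSubgroup I := by
  induction l with
  | nil => simp
  | cons b l ih =>
    simp only [List.map_cons, List.prod_cons]
    exact Subgroup.mul_mem _ (simpleReflection_mem_weyl (hl b List.mem_cons_self))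
      (ih fun a ha => hl a (List.mem_cons_of_mem b ha))

lemma comb_sdiff {Δ S : Finset V} (g : V → ℝ) :
    ∑ a ∈ Δ \ S, g a • a = ∑ a ∈ Δ, (if a ∈ Δ \ S then g a else 0) • a := by
  have h : Δ \ S = Δ.filter (· ∈ Δ \ S) := by
    rw [Finset.filter_mem_eq_inter, Finset.inter_eq_right.mpr (Finset.sdiff_subset)]
  conv_lhs => rw [h]
  rw [Finset.sum_filter]
  exact Finset.sum_congr rfl fun a _ => by split <;> simp

lemma key_identity (α γ : V) :
    γ + -(simpleReflection α γ) = (2 * ⟪α, γ⟫ / ‖α‖ ^ 2) • α := by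
  rw [simpleReflection_apply]; abel

/-- s_α maps positive roots not proportional to α to positive roots not proportional to α. -/
lemma refl_pos {Φ : Set V} {Δ : Finset V}
    (hind : LinearIndependent ℝ (fun a : Δ => (a : V)))
    (hbase : ∀ γ ∈ Φ, IsNNComb Δ γ ∨ IsNNComb Δ (-γ))
    (hinv : ∀ w ∈ weylSubgroup Δ, ∀ γ ∈ Φ, w γ ∈ Φ)
    {α γ : V} (hα : α ∈ Δ) (hγ : γ ∈ posRoots Φ Δ) (hsp : γ ∉ Submodule.span ℝ {α}) :
    simpleReflection α γ ∈ posRoots Φ Δ ∧ simpleReflection α γ ∉ Submodule.span ℝ {α} := by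
  have hΦ : simpleReflection α γ ∈ Φ := hinv _ (simpleReflection_mem_weyl hα) γ hγ.1
  constructor
  · rcases hbase _ hΦ with h | h
    · exact ⟨hΦ, h⟩
    · exfalso
      obtain ⟨hγΦ, c, hc⟩ := hγ
      obtain ⟨d, hd⟩ := h
      have hsum : ∑ a ∈ Δ, ((c a : ℝ) + (d a : ℝ)) • a
          = ∑ a ∈ Δ, (if a = α then 2 * ⟪α, γ⟫ / ‖α‖ ^ 2 else 0) • a := by
        rw [← single_comb hα, ← key_identity α γ]
        simp only [add_smul, Finset.sum_add_distrib, ← hc, ← hd]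
      have hco := coeff_unique hind hsum
      have hc0 : ∀ b ∈ Δ, b ≠ α → c b = 0 := by
        intro b hb hbne
        have := hco b hb
        simp only [if_neg hbne] at this
        have h1 : (0:ℝ) ≤ c b := Nat.cast_nonneg _
        have h2 : (0:ℝ) ≤ d b := Nat.cast_nonneg _
        exact_mod_cast le_antisymm (by linarith) h1
      apply hsp
      have : γ = (c α : ℝ) • α := by
        rw [hc, Finset.sum_eq_single_of_mem α hα]
        intro b hb hbne
        rw [hc0 b hb hbne]
        simp
      rw [this]
      exact Submodule.smul_mem _ _ (Submodule.mem_span_singleton_self α)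
  · intro hin
    apply hsp
    obtain ⟨t, ht⟩ := Submodule.mem_span_singleton.mp hin
    have : γ = t • (simpleReflection α α) := by
      rw [← map_smul, ht, simpleReflection_involutive]
    rw [this, simpleReflection_apply_self, smul_neg]
    exact Submodule.neg_mem _ (Submodule.smul_mem _ _ (Submodule.mem_span_singleton_self α))

/-- s_α for α ∈ Δ \ S preserves Φ^rad(S). -/
lemma refl_phiRad {Φ : Set V} {Δ S : Finset V} (h0 : (0 : V) ∉ Φ)
    (hind : LinearIndependent ℝ (fun a : Δ => (a : V)))
    (hbase : ∀ γ ∈ Φ, IsNNComb Δ γ ∨ IsNNComb Δ (-γ))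
    (hinv : ∀ w ∈ weylSubgroup Δ, ∀ γ ∈ Φ, w γ ∈ Φ)
    {α γ : V} (hα : α ∈ Δ \ S) (hγ : γ ∈ phiRad Φ Δ S) :
    simpleReflection α γ ∈ phiRad Φ Δ S := by
  obtain ⟨hγp, hγn⟩ := hγ
  have hαΔ : α ∈ Δ := (Finset.mem_sdiff.mp hα).1
  have hsp : γ ∉ Submodule.span ℝ {α} := by
    intro hin
    obtain ⟨c, hcpos, hceq⟩ := posRoot_in_span h0 hind hαΔ hγp hin
    exact hγn ⟨fun a => if a = α then c else 0, by
      simp only [Nat.cast_ite, Nat.cast_zero]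
      rw [← single_comb hα (c : ℝ)]
      exact hceq⟩
  obtain ⟨hpos, _⟩ := refl_pos hind hbase hinv hαΔ hγp hsp
  refine ⟨hpos, ?_⟩
  intro ⟨d, hd⟩
  apply hγn
  -- γ = s_α γ + k • α  where both terms are supported on Δ \ S
  obtain ⟨hγΦ, c, hc⟩ := hγp
  set k : ℝ := 2 * ⟪α, γ⟫ / ‖α‖ ^ 2 with hk
  have hγeq : γ = ∑ a ∈ Δ, ((if a ∈ Δ \ S then (d a : ℝ) else 0) + (if a = α then k else 0)) • a := by
    have h1 : γ = simpleReflection α γ + k • α := by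
      rw [hk, ← key_identity α γ]; abel
    rw [h1, hd, comb_sdiff (fun a => (d a : ℝ)), single_comb hαΔ k]
    simp only [add_smul, Finset.sum_add_distrib]
  have hco := coeff_unique hind (hc.symm.trans hγeq)
  refine ⟨c, ?_⟩
  rw [hc]
  refine (Finset.sum_subset Finset.sdiff_subset ?_).symm
  intro a ha hna
  have hne : a ≠ α := fun h => hna (h ▸ hα)
  have := hco a ha
  simp only [if_neg hna, if_neg hne, zero_add] at this
  rw [this, zero_smul]


lemma refl_phiRad_image {Φ : Set V} {Δ S : Finset V} (h0 : (0 : V) ∉ Φ)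
    (hind : LinearIndependent ℝ (fun a : Δ => (a : V)))
    (hbase : ∀ γ ∈ Φ, IsNNComb Δ γ ∨ IsNNComb Δ (-γ))
    (hinv : ∀ w ∈ weylSubgroup Δ, ∀ γ ∈ Φ, w γ ∈ Φ)
    {α : V} (hα : α ∈ Δ \ S) :
    (fun x => simpleReflection α x) '' phiRad Φ Δ S = phiRad Φ Δ S := by
  apply Set.Subset.antisymm
  · rintro _ ⟨γ, hγ, rfl⟩
    exact refl_phiRad h0 hind hbase hinv hα hγ
  · intro γ hγ
    exact ⟨simpleReflection α γ, refl_phiRad h0 hind hbase hinv hα hγ,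
      simpleReflection_involutive α γ⟩

/-- Each element of the parabolic subgroup stabilizes Φ^rad(S). -/
lemma parabolic_stab {Φ : Set V} {Δ S : Finset V} (h0 : (0 : V) ∉ Φ)
    (hind : LinearIndependent ℝ (fun a : Δ => (a : V)))
    (hbase : ∀ γ ∈ Φ, IsNNComb Δ γ ∨ IsNNComb Δ (-γ))
    (hinv : ∀ w ∈ weylSubgroup Δ, ∀ γ ∈ Φ, w γ ∈ Φ)
    {w : V ≃ₗ[ℝ] V} (hw : w ∈ weylSubgroup (Δ \ S)) :
    (fun x => w x) '' phiRad Φ Δ S = phiRad Φ Δ S := by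
  induction hw using Subgroup.closure_induction with
  | mem w hw =>
    obtain ⟨α, hα, rfl⟩ := hw
    exact refl_phiRad_image h0 hind hbase hinv hα
  | one => simp
  | mul u v _ _ hiu hiv =>
    have : (fun x => (u * v) x) = (fun x => u x) ∘ (fun x => v x) := rfl
    rw [this, Set.image_comp, hiv, hiu]
  | inv u _ hiu =>
    conv_lhs => rw [← hiu]
    rw [← Set.image_comp]
    have : (fun x => u⁻¹ x) ∘ (fun x => u x) = id := by
      funext x
      exact u.symm_apply_apply x
    rw [this, Set.image_id]

/-- The deletion lemma: if a word sends the simple root β to a negative root, then the word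
times `s_β` can be shortened. -/
lemma deletion {Φ : Set V} {Δ : Finset V} (h0 : (0 : V) ∉ Φ) (hΔΦ : ↑Δ ⊆ Φ)
    (hind : LinearIndependent ℝ (fun a : Δ => (a : V)))
    (hbase : ∀ γ ∈ Φ, IsNNComb Δ γ ∨ IsNNComb Δ (-γ))
    (hinv : ∀ w ∈ weylSubgroup Δ, ∀ γ ∈ Φ, w γ ∈ Φ) :
    ∀ (l : List V), (∀ a ∈ l, a ∈ Δ) → ∀ β ∈ Δ,
      (l.map simpleReflection).prod β ∉ posRoots Φ Δ →
      ∃ l' : List V, (∀ a ∈ l', a ∈ Δ) ∧ l'.length + 1 = l.length ∧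
        (l.map simpleReflection).prod * simpleReflection β = (l'.map simpleReflection).prod := by
  intro l
  induction l with
  | nil =>
    intro _ β hβ hneg
    exact absurd (mem_posRoots_of_mem_base hΔΦ hβ) (by simpa using hneg)
  | cons α l ih =>
    intro hl β hβ hneg
    have hαΔ : α ∈ Δ := hl α List.mem_cons_self
    have hlΔ : ∀ a ∈ l, a ∈ Δ := fun a ha => hl a (List.mem_cons_of_mem α ha)
    set u : V ≃ₗ[ℝ] V := (l.map simpleReflection).prod with hu
    have huW : u ∈ weylSubgroup Δ := word_mem hlΔ
    have hprod : ((α :: l).map simpleReflection).prod = simpleReflection α * u := by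
      simp [hu]
    by_cases hcase : u β ∈ posRoots Φ Δ
    · by_cases hsp : u β ∈ Submodule.span ℝ {α}
      · -- u β = t • α with t ≠ 0, so s_α = u s_β u⁻¹ and the product collapses to u itself
        obtain ⟨t, ht⟩ := Submodule.mem_span_singleton.mp hsp
        have huβ0 : u β ≠ 0 := fun h => h0 (h ▸ hcase.1)
        have ht0 : t ≠ 0 := by rintro rfl; simp at ht; exact huβ0 ht.symm
        have hconj : u * simpleReflection β * u⁻¹ = simpleReflection α := by
          rw [conj_reflection (weyl_inner huW) β, ← ht, simpleReflection_smul ht0]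
        refine ⟨l, hlΔ, by simp, ?_⟩
        rw [hprod, ← hconj]
        group
        rw [mul_assoc, simpleReflection_mul_self, mul_one]
      · exfalso
        apply hneg
        rw [hprod, mulApp]
        exact (refl_pos hind hbase hinv hαΔ hcase hsp).1
    · -- induction on the tail
      obtain ⟨l', hl', hlen, heq⟩ := ih hlΔ β hβ hcase
      refine ⟨α :: l', fun a ha => by
        rcases List.mem_cons.mp ha with h | h
        · exact h ▸ hαΔ
        · exact hl' a h, by simp [← hlen], ?_⟩
      rw [hprod, mul_assoc, heq]
      simp

/-- A word whose product sends every simple root to a positive root is the identity. -/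
lemma word_eq_one {Φ : Set V} {Δ : Finset V} (h0 : (0 : V) ∉ Φ) (hΔΦ : ↑Δ ⊆ Φ)
    (hind : LinearIndependent ℝ (fun a : Δ => (a : V)))
    (hbase : ∀ γ ∈ Φ, IsNNComb Δ γ ∨ IsNNComb Δ (-γ))
    (hinv : ∀ w ∈ weylSubgroup Δ, ∀ γ ∈ Φ, w γ ∈ Φ) :
    ∀ (n : ℕ) (l : List V), l.length ≤ n → (∀ a ∈ l, a ∈ Δ) →
      (∀ a ∈ Δ, (l.map simpleReflection).prod a ∈ posRoots Φ Δ) →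
      (l.map simpleReflection).prod = 1 := by
  intro n
  induction n with
  | zero =>
    intro l hlen _ _
    rw [List.length_eq_zero_iff.mp (Nat.le_zero.mp hlen)]
    simp
  | succ n ihn =>
    intro l hlen hlΔ hpos
    rcases List.eq_nil_or_concat l with rfl | ⟨L, β, rfl⟩
    · simp
    · rw [List.concat_eq_append] at hlen hlΔ hpos ⊢
      have hβΔ : β ∈ Δ := hlΔ β (by simp)
      have hLΔ : ∀ a ∈ L, a ∈ Δ := fun a ha => hlΔ a (by simp [ha])
      set w : V ≃ₗ[ℝ] V := ((L ++ [β]).map simpleReflection).prod with hw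
      set u : V ≃ₗ[ℝ] V := (L.map simpleReflection).prod with hu
      have hwu : w = u * simpleReflection β := by simp [hw, hu]
      have huβ : u β = -(w β) := by
        rw [hwu, mulApp, simpleReflection_apply_self, map_neg, neg_neg]
      have hwβ : w β ∈ posRoots Φ Δ := hpos β hβΔ
      have huβnot : u β ∉ posRoots Φ Δ := by
        intro h
        have hzero : w β = 0 := by
          apply eq_zero_of_nncomb_and_neg hind hwβ.2
          rw [← huβ]
          exact h.2
        exact h0 (hzero ▸ hwβ.1)
      obtain ⟨l', hl'Δ, hlen', heq⟩ := deletion h0 hΔΦ hind hbase hinv L hLΔ β hβΔ huβnot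
      have hwl' : w = (l'.map simpleReflection).prod := by rw [hwu, ← heq]
      have hlen'' : l'.length ≤ n := by
        have h1 : (L ++ [β]).length = L.length + 1 := by simp
        omega
      rw [hwl'] at hpos ⊢
      exact ihn l' hlen'' hl'Δ hpos

lemma nncomb_smul {Δ : Finset V} {y : V} (h : IsNNComb Δ y) (c : ℕ) :
    IsNNComb Δ ((c : ℝ) • y) := by
  obtain ⟨e, he⟩ := h
  refine ⟨fun a => c * e a, ?_⟩
  rw [he, Finset.smul_sum]
  refine Finset.sum_congr rfl fun a _ => ?_
  rw [smul_smul]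
  push_cast
  rfl

/-- The hard direction: an element of `W` fixing a vector `x` which is strictly dominant
exactly on `S` lies in the parabolic subgroup `W_{Δ \ S}`. -/
lemma fix_imp_parabolic {Φ : Set V} {Δ S : Finset V} (hfin : Φ.Finite) (h0 : (0 : V) ∉ Φ)
    (hΔΦ : ↑Δ ⊆ Φ)
    (hind : LinearIndependent ℝ (fun a : Δ => (a : V)))
    (hbase : ∀ γ ∈ Φ, IsNNComb Δ γ ∨ IsNNComb Δ (-γ))
    (hinv : ∀ w ∈ weylSubgroup Δ, ∀ γ ∈ Φ, w γ ∈ Φ)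
    (hS : S ⊆ Δ) {x : V}
    (hxS : ∀ a ∈ S, 0 < ⟪x, a⟫) (hxΔ : ∀ a ∈ Δ, 0 ≤ ⟪x, a⟫) :
    ∀ (n : ℕ) (w : V ≃ₗ[ℝ] V), w ∈ weylSubgroup Δ →
      {γ ∈ posRoots Φ Δ | w γ ∉ posRoots Φ Δ}.ncard ≤ n → w x = x →
      w ∈ weylSubgroup (Δ \ S) := by
  have hdom : ∀ γ ∈ posRoots Φ Δ, 0 ≤ ⟪x, γ⟫ := by
    rintro γ ⟨_, c, hc⟩
    rw [hc, inner_sum]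
    refine Finset.sum_nonneg fun a ha => ?_
    rw [real_inner_smul_right]
    exact mul_nonneg (Nat.cast_nonneg _) (hxΔ a ha)
  intro n
  induction n with
  | zero =>
    intro w hwW hn hwx
    by_cases hcase : ∀ a ∈ Δ, w a ∈ posRoots Φ Δ
    · obtain ⟨l, hlΔ, hleq⟩ := weyl_word hwW
      have h1 : (l.map simpleReflection).prod = 1 :=
        word_eq_one h0 hΔΦ hind hbase hinv l.length l le_rfl hlΔ
          (fun a ha => hleq ▸ hcase a ha)
      rw [hleq, h1]
      exact Subgroup.one_mem _
    · exfalso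
      push_neg at hcase
      obtain ⟨α, hαΔ, hαneg⟩ := hcase
      have hαmem : α ∈ {γ ∈ posRoots Φ Δ | w γ ∉ posRoots Φ Δ} :=
        ⟨mem_posRoots_of_mem_base hΔΦ hαΔ, hαneg⟩
      have hfinN : {γ ∈ posRoots Φ Δ | w γ ∉ posRoots Φ Δ}.Finite :=
        hfin.subset fun γ hγ => hγ.1.1
      have := Set.ncard_eq_zero hfinN |>.mp (Nat.le_zero.mp hn)
      rw [this] at hαmem
      exact hαmem
  | succ n ihn =>
    intro w hwW hn hwx
    by_cases hcase : ∀ a ∈ Δ, w a ∈ posRoots Φ Δ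
    · obtain ⟨l, hlΔ, hleq⟩ := weyl_word hwW
      have h1 : (l.map simpleReflection).prod = 1 :=
        word_eq_one h0 hΔΦ hind hbase hinv l.length l le_rfl hlΔ
          (fun a ha => hleq ▸ hcase a ha)
      rw [hleq, h1]
      exact Subgroup.one_mem _
    · push_neg at hcase
      obtain ⟨α, hαΔ, hαneg⟩ := hcase
      have hwαΦ : w α ∈ Φ := hinv w hwW α (hΔΦ hαΔ)
      have hnwα : IsNNComb Δ (-(w α)) := by
        rcases hbase _ hwαΦ with h | h
        · exact absurd ⟨hwαΦ, h⟩ hαneg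
        · exact h
      have hws : w * simpleReflection α ∈ weylSubgroup Δ :=
        Subgroup.mul_mem _ hwW (simpleReflection_mem_weyl hαΔ)
      have hnegwα : -(w α) = (w * simpleReflection α) α := by
        rw [mulApp, simpleReflection_apply_self, map_neg]
      have hnegΦ : -(w α) ∈ Φ := by
        rw [hnegwα]
        exact hinv _ hws α (hΔΦ hαΔ)
      have hnwαpos : -(w α) ∈ posRoots Φ Δ := ⟨hnegΦ, hnwα⟩
      have hxα0 : ⟪x, α⟫ = 0 := by
        have h1 : ⟪x, α⟫ = ⟪w x, w α⟫ := (weyl_inner hwW x α).symm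
        rw [hwx] at h1
        have h2 : ⟪x, w α⟫ = -⟪x, -(w α)⟫ := by rw [inner_neg_right, neg_neg]
        have h3 := hdom _ hnwαpos
        have h4 := hxΔ α hαΔ
        linarith [h1, h2]
      have hαS : α ∈ Δ \ S := by
        rw [Finset.mem_sdiff]
        exact ⟨hαΔ, fun hmem => absurd hxα0 (ne_of_gt (hxS α hmem))⟩
      have hsx : simpleReflection α x = x := by
        have hαx0 : ⟪α, x⟫ = 0 := by rw [real_inner_comm]; exact hxα0
        rw [simpleReflection_apply, hαx0]
        simp
      set w' : V ≃ₗ[ℝ] V := w * simpleReflection α with hw'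
      have hw'W : w' ∈ weylSubgroup Δ := hws
      have hw'x : w' x = x := by rw [hw', mulApp, hsx, hwx]
      -- the set of inversions strictly decreases
      have himage : {γ ∈ posRoots Φ Δ | w' γ ∉ posRoots Φ Δ}
          = (fun y => simpleReflection α y) ''
            ({γ ∈ posRoots Φ Δ | w γ ∉ posRoots Φ Δ} \ (Submodule.span ℝ {α} : Set V)) := by
        ext γ
        constructor
        · rintro ⟨hγp, hγn⟩
          have hγsp : γ ∉ Submodule.span ℝ {α} := by
            intro hin
            obtain ⟨c, _, hceq⟩ := posRoot_in_span h0 hind hαΔ hγp hin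
            apply hγn
            have heval : w' γ = (c : ℝ) • (-(w α)) := by
              rw [hceq, map_smul, hw', mulApp, simpleReflection_apply_self, map_neg]
            constructor
            · have : w' γ ∈ Φ := hinv _ hw'W γ hγp.1
              exact this
            · rw [heval]
              exact nncomb_smul hnwα c
          have h2 := refl_pos hind hbase hinv hαΔ hγp hγsp
          refine ⟨simpleReflection α γ, ⟨⟨h2.1, ?_⟩, h2.2⟩, simpleReflection_involutive α γ⟩
          have : w (simpleReflection α γ) = w' γ := by rw [hw', mulApp]
          rw [this]
          exact hγn
        · rintro ⟨δ, ⟨⟨hδp, hδn⟩, hδsp⟩, rfl⟩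
          refine ⟨(refl_pos hind hbase hinv hαΔ hδp hδsp).1, ?_⟩
          have : w' (simpleReflection α δ) = w δ := by
            rw [hw', mulApp, simpleReflection_involutive]
          rw [this]
          exact hδn
      have hαmem : α ∈ {γ ∈ posRoots Φ Δ | w γ ∉ posRoots Φ Δ} :=
        ⟨mem_posRoots_of_mem_base hΔΦ hαΔ, hαneg⟩
      have hfinN : {γ ∈ posRoots Φ Δ | w γ ∉ posRoots Φ Δ}.Finite :=
        hfin.subset fun γ hγ => hγ.1.1
      have hssub : {γ ∈ posRoots Φ Δ | w γ ∉ posRoots Φ Δ} \ (Submodule.span ℝ {α} : Set V)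
          ⊂ {γ ∈ posRoots Φ Δ | w γ ∉ posRoots Φ Δ} := by
        refine Set.ssubset_iff_subset_ne.mpr ⟨Set.diff_subset, fun h => ?_⟩
        have : α ∈ {γ ∈ posRoots Φ Δ | w γ ∉ posRoots Φ Δ} \ (Submodule.span ℝ {α} : Set V) :=
          h.symm ▸ hαmem
        exact this.2 (Submodule.mem_span_singleton_self α)
      have hcard : {γ ∈ posRoots Φ Δ | w' γ ∉ posRoots Φ Δ}.ncard
          < {γ ∈ posRoots Φ Δ | w γ ∉ posRoots Φ Δ}.ncard := by
        rw [himage, Set.ncard_image_of_injective _ (simpleReflection α).injective]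
        exact Set.ncard_lt_ncard hssub hfinN
      have hw'par : w' ∈ weylSubgroup (Δ \ S) :=
        ihn w' hw'W (by omega) hw'x
      have hfinal : w = w' * simpleReflection α := by
        rw [hw', mul_assoc, simpleReflection_mul_self, mul_one]
      rw [hfinal]
      exact Subgroup.mul_mem _ hw'par (simpleReflection_mem_weyl hαS)

lemma base_not_nncomb_sdiff {Δ S : Finset V}
    (hind : LinearIndependent ℝ (fun a : Δ => (a : V)))
    {α : V} (hαΔ : α ∈ Δ) (hαS : α ∈ S) : ¬ IsNNComb (Δ \ S) α := by
  rintro ⟨d, hd⟩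
  have hαns : α ∉ Δ \ S := fun h => (Finset.mem_sdiff.mp h).2 hαS
  have h1 : ∑ a ∈ Δ, (if a = α then (1:ℝ) else 0) • a
      = ∑ a ∈ Δ, (if a ∈ Δ \ S then (d a : ℝ) else 0) • a := by
    rw [← single_comb hαΔ (1:ℝ), one_smul, ← comb_sdiff (fun a => (d a : ℝ)), ← hd]
  have := coeff_unique hind h1 α hαΔ
  simp only [if_pos rfl, if_neg hαns] at this
  exact one_ne_zero this

lemma dominant_pos {Φ : Set V} {Δ S : Finset V} (h0 : (0 : V) ∉ Φ) (hΔΦ : ↑Δ ⊆ Φ)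
    (hind : LinearIndependent ℝ (fun a : Δ => (a : V)))
    (hbase : ∀ γ ∈ Φ, IsNNComb Δ γ ∨ IsNNComb Δ (-γ))
    (hinv : ∀ w ∈ weylSubgroup Δ, ∀ γ ∈ Φ, w γ ∈ Φ)
    (hS : S ⊆ Δ) (T : Finset V) (hT : ∀ γ, γ ∈ T ↔ γ ∈ phiRad Φ Δ S)
    {α : V} (hαS : α ∈ S) : 0 < ⟪∑ γ ∈ T, γ, α⟫ := by
  classical
  have hαΔ : α ∈ Δ := hS hαS
  have hα0 : α ≠ 0 := fun h => h0 (h ▸ hΔΦ hαΔ)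
  have hnorm : (0:ℝ) < ‖α‖ ^ 2 := pow_pos (norm_pos_iff.mpr hα0) 2
  rw [sum_inner]
  set p : V → Prop := fun γ => γ ∈ Submodule.span ℝ {α} with hp
  set q : V → Prop := fun γ => simpleReflection α γ ∈ phiRad Φ Δ S with hq
  have hsplit : ∑ γ ∈ T, ⟪γ, α⟫
      = (∑ γ ∈ T.filter p, ⟪γ, α⟫)
        + ((∑ γ ∈ (T.filter fun γ => ¬ p γ).filter q, ⟪γ, α⟫)
          + (∑ γ ∈ (T.filter fun γ => ¬ p γ).filter fun γ => ¬ q γ, ⟪γ, α⟫)) := by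
    rw [Finset.sum_filter_add_sum_filter_not (T.filter fun γ => ¬ p γ) q,
      Finset.sum_filter_add_sum_filter_not T p]
  rw [hsplit]
  have hMpos : 0 < ∑ γ ∈ T.filter p, ⟪γ, α⟫ := by
    apply Finset.sum_pos
    · intro γ hγ
      obtain ⟨hγT, hγsp⟩ := Finset.mem_filter.mp hγ
      obtain ⟨c, hcpos, hceq⟩ :=
        posRoot_in_span h0 hind hαΔ ((hT γ).mp hγT).1 hγsp
      rw [hceq, real_inner_smul_left, real_inner_self_eq_norm_sq]
      have : (0:ℝ) < c := by exact_mod_cast hcpos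
      exact mul_pos this hnorm
    · refine ⟨α, Finset.mem_filter.mpr ⟨(hT α).mpr ?_, Submodule.mem_span_singleton_self α⟩⟩
      exact ⟨mem_posRoots_of_mem_base hΔΦ hαΔ, base_not_nncomb_sdiff hind hαΔ hαS⟩
  have hA0 : ∑ γ ∈ (T.filter fun γ => ¬ p γ).filter q, ⟪γ, α⟫ = 0 := by
    set A := (T.filter fun γ => ¬ p γ).filter q with hA
    have hmem : ∀ γ ∈ A, simpleReflection α γ ∈ A := by
      intro γ hγ
      obtain ⟨hγ1, hγq⟩ := Finset.mem_filter.mp hγ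
      obtain ⟨hγT, hγnp⟩ := Finset.mem_filter.mp hγ1
      have hγrad := (hT γ).mp hγT
      have h2 := refl_pos hind hbase hinv hαΔ hγrad.1 hγnp
      refine Finset.mem_filter.mpr ⟨Finset.mem_filter.mpr ⟨(hT _).mpr hγq, h2.2⟩, ?_⟩
      show simpleReflection α (simpleReflection α γ) ∈ phiRad Φ Δ S
      rw [simpleReflection_involutive]
      exact hγrad
    have hre : ∑ γ ∈ A, ⟪γ, α⟫ = ∑ γ ∈ A, ⟪simpleReflection α γ, α⟫ := by
      apply Finset.sum_nbij' (fun γ => simpleReflection α γ) (fun γ => simpleReflection α γ)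
      · exact hmem
      · exact hmem
      · intro γ _; exact simpleReflection_involutive α γ
      · intro γ _; exact simpleReflection_involutive α γ
      · intro γ _
        rw [simpleReflection_involutive]
    have hneg : ∀ γ : V, ⟪simpleReflection α γ, α⟫ = -⟪γ, α⟫ := by
      intro γ
      have h1 : ⟪simpleReflection α γ, α⟫
          = ⟪simpleReflection α (simpleReflection α γ), simpleReflection α α⟫ :=
        (simpleReflection_inner α _ _).symm
      rw [h1, simpleReflection_involutive, simpleReflection_apply_self, inner_neg_right]
    have : ∑ γ ∈ A, ⟪γ, α⟫ = -∑ γ ∈ A, ⟪γ, α⟫ := by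
      conv_lhs => rw [hre]
      rw [← Finset.sum_neg_distrib]
      exact Finset.sum_congr rfl fun γ _ => hneg γ
    linarith
  have hBpos : 0 ≤ ∑ γ ∈ (T.filter fun γ => ¬ p γ).filter fun γ => ¬ q γ, ⟪γ, α⟫ := by
    apply Finset.sum_nonneg
    intro γ hγ
    obtain ⟨hγ1, hγnq⟩ := Finset.mem_filter.mp hγ
    obtain ⟨hγT, hγnp⟩ := Finset.mem_filter.mp hγ1
    have hγrad := (hT γ).mp hγT
    have h2 := refl_pos hind hbase hinv hαΔ hγrad.1 hγnp
    have hcomb : IsNNComb (Δ \ S) (simpleReflection α γ) := by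
      by_contra hcon
      exact hγnq ⟨h2.1, hcon⟩
    obtain ⟨d, hd⟩ := hcomb
    obtain ⟨hγΦ, c, hc⟩ := hγrad.1
    set k : ℝ := 2 * ⟪α, γ⟫ / ‖α‖ ^ 2 with hk
    have hαns : α ∉ Δ \ S := fun h => (Finset.mem_sdiff.mp h).2 hαS
    have hγeq : γ = ∑ a ∈ Δ, ((if a ∈ Δ \ S then (d a : ℝ) else 0) + (if a = α then k else 0)) • a := by
      have h1 : γ = simpleReflection α γ + k • α := by
        rw [hk, ← key_identity α γ]; abel
      rw [h1, hd, comb_sdiff (fun a => (d a : ℝ)), single_comb hαΔ k]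
      simp only [add_smul, Finset.sum_add_distrib]
    have hco := coeff_unique hind (hc.symm.trans hγeq) α hαΔ
    simp only [hαns, if_false, if_true, zero_add] at hco
    have hknn : 0 ≤ k := by rw [← hco]; exact Nat.cast_nonneg _
    have : ⟪γ, α⟫ = k * ‖α‖ ^ 2 / 2 := by
      rw [hk, real_inner_comm γ α]
      field_simp
    rw [this]
    positivity
  linarith

/-- The stabilizer of `Φ^rad(S)` in the Weyl group `W` is the standard parabolic
subgroup `W_{Δ \ S}`. -/
theorem stabilizer_phiRad_eq_parabolic
    (Φ : Set V) (Δ : Finset V)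
    (hfin : Φ.Finite) (h0 : (0 : V) ∉ Φ) (hΔΦ : ↑Δ ⊆ Φ)
    (hind : LinearIndependent ℝ (fun a : Δ => (a : V)))
    (hbase : ∀ γ ∈ Φ, IsNNComb Δ γ ∨ IsNNComb Δ (-γ))
    (hinv : ∀ w ∈ weylSubgroup Δ, ∀ γ ∈ Φ, w γ ∈ Φ)
    (S : Finset V) (hS : S ⊆ Δ) :
    ∀ w ∈ weylSubgroup Δ,
      ((fun x => w x) '' phiRad Φ Δ S = phiRad Φ Δ S ↔ w ∈ weylSubgroup (Δ \ S)) := by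
  have hradfin : (phiRad Φ Δ S).Finite := hfin.subset fun γ hγ => hγ.1.1
  set T : Finset V := hradfin.toFinset with hTdef
  have hT : ∀ γ, γ ∈ T ↔ γ ∈ phiRad Φ Δ S := fun γ => hradfin.mem_toFinset
  set x : V := ∑ γ ∈ T, γ with hx
  -- any automorphism stabilizing phiRad fixes x
  have hsum : ∀ w : V ≃ₗ[ℝ] V, (fun y => w y) '' phiRad Φ Δ S = phiRad Φ Δ S → w x = x := by
    intro w himg
    have hTim : T.image w = T := by
      apply Finset.coe_injective
      rw [Finset.coe_image, hradfin.coe_toFinset]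
      exact himg
    have h1 : w x = ∑ γ ∈ T, w γ := map_sum w _ T
    have h2 : ∑ γ ∈ T.image w, (γ : V) = ∑ γ ∈ T, w γ :=
      Finset.sum_image fun a _ b _ h => w.injective h
    rw [h1, ← h2, hTim]
  -- x is orthogonal to the simple roots not in S
  have hxI : ∀ α ∈ Δ \ S, ⟪x, α⟫ = 0 := by
    intro α hα
    have hα0 : α ≠ 0 := fun h => h0 (h ▸ hΔΦ (Finset.mem_sdiff.mp hα).1)
    have hsαx : simpleReflection α x = x :=
      hsum _ (refl_phiRad_image h0 hind hbase hinv hα)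
    rw [simpleReflection_apply, sub_eq_self] at hsαx
    rcases smul_eq_zero.mp hsαx with h | h
    · have hn : ‖α‖ ^ 2 ≠ 0 := pow_ne_zero _ (norm_ne_zero_iff.mpr hα0)
      rw [real_inner_comm]
      field_simp at h
      linarith
    · exact absurd h hα0
  have hxS : ∀ a ∈ S, 0 < ⟪x, a⟫ := by
    intro a ha
    have := dominant_pos h0 hΔΦ hind hbase hinv hS T hT ha
    rw [hx]
    exact this
  have hxΔ : ∀ a ∈ Δ, 0 ≤ ⟪x, a⟫ := by
    intro a ha
    by_cases h : a ∈ S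
    · exact le_of_lt (hxS a h)
    · exact le_of_eq (hxI a (Finset.mem_sdiff.mpr ⟨ha, h⟩)).symm
  intro w hwW
  constructor
  · intro himg
    exact fix_imp_parabolic hfin h0 hΔΦ hind hbase hinv hS hxS hxΔ
      {γ ∈ posRoots Φ Δ | w γ ∉ posRoots Φ Δ}.ncard w hwW le_rfl (hsum w himg)
  · intro hpar
    exact parabolic_stab h0 hind hbase hinv hpar
end

section
/- Let g and h be restricted Lie algebras over a field k of characteristic p > 0, and let E ⊆ g ⊕ h be an elementary subalgebra of maximal dimension. If E₁ ⊆ g and E₂ ⊆ h are the images of E under the two projections, then E = E₁ ⊕ E₂. -/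
set_option autoImplicit false

open Module

/-- A restricted Lie algebra over `k` in characteristic `p`: a Lie algebra equipped with a
`p`-operation `x ↦ x^[p]`. -/
class RestrictedLieAlgebra (p : ℕ) (k : Type*) (L : Type*)
    [CommRing k] [LieRing L] [LieAlgebra k L] : Type _ where
  /-- The `p`-operation. -/
  pmap : L → L
  pmap_zero : pmap 0 = 0
  pmap_smul : ∀ (a : k) (x : L), pmap (a • x) = a ^ p • pmap x
  lie_pmap : ∀ x y : L, ⁅pmap x, y⁆ = ((LieAlgebra.ad k L x) ^ p) y

variable (p : ℕ) (k : Type*) {L M : Type*}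

section

variable [CommRing k] [LieRing L] [LieAlgebra k L] [RestrictedLieAlgebra p k L]

/-- An elementary subalgebra: a Lie subalgebra that is abelian and on which the
`p`-operation vanishes identically. -/
def LieSubalgebra.IsElementary (E : LieSubalgebra k L) : Prop :=
  (∀ x ∈ E, ∀ y ∈ E, ⁅x, y⁆ = (0 : L)) ∧
    ∀ x ∈ E, RestrictedLieAlgebra.pmap p k x = (0 : L)

end

section Prod

variable [CommRing k] [LieRing L] [LieAlgebra k L] [LieRing M] [LieAlgebra k M]

instance : LieRing (L × M) :=
  { (inferInstance : AddCommGroup (L × M)) with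
    bracket := fun x y => (⁅x.1, y.1⁆, ⁅x.2, y.2⁆)
    add_lie := fun x y z => Prod.ext (add_lie x.1 y.1 z.1) (add_lie x.2 y.2 z.2)
    lie_add := fun x y z => Prod.ext (lie_add x.1 y.1 z.1) (lie_add x.2 y.2 z.2)
    lie_self := fun x => Prod.ext (lie_self x.1) (lie_self x.2)
    leibniz_lie := fun x y z =>
      Prod.ext (leibniz_lie x.1 y.1 z.1) (leibniz_lie x.2 y.2 z.2) }

instance : LieAlgebra k (L × M) :=
  { (inferInstance : Module k (L × M)) with
    lie_smul := fun t x y => Prod.ext (lie_smul t x.1 y.1) (lie_smul t x.2 y.2) }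

instance [RestrictedLieAlgebra p k L] [RestrictedLieAlgebra p k M] :
    RestrictedLieAlgebra p k (L × M) where
  pmap x := (RestrictedLieAlgebra.pmap p k x.1, RestrictedLieAlgebra.pmap p k x.2)
  pmap_zero := by simp [RestrictedLieAlgebra.pmap_zero]
  pmap_smul a x := by
    ext <;> simp [RestrictedLieAlgebra.pmap_smul]
  lie_pmap x y := by
    have key : ∀ (n : ℕ) (z : L × M),
        ((LieAlgebra.ad k (L × M) x) ^ n) z
          = (((LieAlgebra.ad k L x.1) ^ n) z.1, ((LieAlgebra.ad k M x.2) ^ n) z.2) := by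
      intro n
      induction n with
      | zero => intro z; rfl
      | succ n ih =>
          intro z
          rw [pow_succ, pow_succ, pow_succ]
          simp only [Module.End.mul_apply, LieAlgebra.ad_apply]
          exact ih ⁅x, z⁆
    rw [key p y]
    exact Prod.ext (RestrictedLieAlgebra.lie_pmap x.1 y.1)
      (RestrictedLieAlgebra.lie_pmap x.2 y.2)

/-- The first projection `L × M → L` as a morphism of Lie algebras. -/
def fstLieHom : L × M →ₗ⁅k⁆ L :=
  { LinearMap.fst k L M with map_lie' := rfl }

/-- The second projection `L × M → M` as a morphism of Lie algebras. -/
def sndLieHom : L × M →ₗ⁅k⁆ M :=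
  { LinearMap.snd k L M with map_lie' := rfl }

end Prod

/-- If `E` is an elementary subalgebra of maximal dimension of `g ⊕ h` and `E₁`, `E₂` are
its images under the two projections, then `E = E₁ ⊕ E₂`. -/
theorem elementary_max_eq_prod_of_images
    {p : ℕ} (hp : 0 < p) {k L M : Type*} [Field k] [CharP k p]
    [LieRing L] [LieAlgebra k L] [LieRing M] [LieAlgebra k M]
    [RestrictedLieAlgebra p k L] [RestrictedLieAlgebra p k M]
    (E : LieSubalgebra k (L × M))
    (hE : E.IsElementary p)
    (hmax : ∀ E' : LieSubalgebra k (L × M), E'.IsElementary p →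
      Module.finrank k E' ≤ Module.finrank k E) :
    (E : Set (L × M)) =
      (↑(E.map (fstLieHom k)) : Set L) ×ˢ (↑(E.map (sndLieHom k)) : Set M) := by
  classical
  obtain ⟨habel, hpz⟩ := hE
  set A : Submodule k L := (E.map (fstLieHom k)).toSubmodule with hA
  set B : Submodule k M := (E.map (sndLieHom k)).toSubmodule with hB
  -- membership descriptions
  have hmemA : ∀ x : L, x ∈ A ↔ ∃ e, e ∈ E ∧ (e : L × M).1 = x := by
    intro x
    constructor
    · rintro ⟨e, he, rfl⟩; exact ⟨e, he, rfl⟩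
    · rintro ⟨e, he, rfl⟩; exact ⟨e, he, rfl⟩
  have hmemB : ∀ x : M, x ∈ B ↔ ∃ e, e ∈ E ∧ (e : L × M).2 = x := by
    intro x
    constructor
    · rintro ⟨e, he, rfl⟩; exact ⟨e, he, rfl⟩
    · rintro ⟨e, he, rfl⟩; exact ⟨e, he, rfl⟩
  -- the product is abelian with trivial p-operation
  have habel' : ∀ x ∈ A.prod B, ∀ y ∈ A.prod B, ⁅x, y⁆ = (0 : L × M) := by
    rintro x ⟨hx1, hx2⟩ y ⟨hy1, hy2⟩
    obtain ⟨e, he, he1⟩ := (hmemA x.1).1 hx1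
    obtain ⟨f, hf, hf1⟩ := (hmemA y.1).1 hy1
    obtain ⟨e', he', he'2⟩ := (hmemB x.2).1 hx2
    obtain ⟨f', hf', hf'2⟩ := (hmemB y.2).1 hy2
    have h1 : ⁅x.1, y.1⁆ = (0 : L) := by
      have := habel e he f hf
      rw [← he1, ← hf1]
      exact congrArg Prod.fst this
    have h2 : ⁅x.2, y.2⁆ = (0 : M) := by
      have := habel e' he' f' hf'
      rw [← he'2, ← hf'2]
      exact congrArg Prod.snd this
    exact Prod.ext h1 h2
  have hpz' : ∀ x ∈ A.prod B, RestrictedLieAlgebra.pmap p k x = (0 : L × M) := by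
    rintro x ⟨hx1, hx2⟩
    obtain ⟨e, he, he1⟩ := (hmemA x.1).1 hx1
    obtain ⟨e', he', he'2⟩ := (hmemB x.2).1 hx2
    have h1 : RestrictedLieAlgebra.pmap p k x.1 = (0 : L) := by
      rw [← he1]
      exact congrArg Prod.fst (hpz e he)
    have h2 : RestrictedLieAlgebra.pmap p k x.2 = (0 : M) := by
      rw [← he'2]
      exact congrArg Prod.snd (hpz e' he')
    exact Prod.ext h1 h2
  -- any submodule of `A.prod B` yields an elementary Lie subalgebra
  have mkElem : ∀ S : Submodule k (L × M), S ≤ A.prod B →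
      ∃ E'' : LieSubalgebra k (L × M), E''.toSubmodule = S ∧ E''.IsElementary p := by
    intro S hS
    refine ⟨{ S with lie_mem' := ?_ }, rfl, ?_, ?_⟩
    · intro x y hx hy
      have : ⁅x, y⁆ = (0 : L × M) := habel' x (hS hx) y (hS hy)
      rw [this]; exact S.zero_mem
    · intro x hx y hy
      exact habel' x (hS hx) y (hS hy)
    · intro x hx
      exact hpz' x (hS hx)
  -- `A.prod B` is finite dimensional
  have hfd : FiniteDimensional k ↥(A.prod B) := by
    by_contra hinf
    have hrank : (↑(finrank k E + 1) : Cardinal) ≤ Module.rank k ↥(A.prod B) := by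
      have h1 : ¬ Module.rank k ↥(A.prod B) < Cardinal.aleph0 :=
        fun h => hinf (Module.rank_lt_aleph0_iff.1 h)
      exact le_trans (le_of_lt (Cardinal.nat_lt_aleph0 _)) (not_lt.1 h1)
    obtain ⟨s, hcard, hli⟩ := le_rank_iff_exists_linearIndependent_finset.1 hrank
    -- push the independent family into `L × M`
    set v : ↥(s : Set ↥(A.prod B)) → L × M := fun x => ((x : ↥(A.prod B)) : L × M) with hv
    have hliv : LinearIndependent k v :=
      hli.map' (A.prod B).subtype (Submodule.ker_subtype _)
    have hspan_le : Submodule.span k (Set.range v) ≤ A.prod B := by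
      rw [Submodule.span_le]
      rintro _ ⟨x, rfl⟩
      exact ((x : ↥(A.prod B))).2
    obtain ⟨E'', hE''S, hE''elem⟩ := mkElem _ hspan_le
    have hle := hmax E'' hE''elem
    have hfr : finrank k ↥E'' = finrank k E + 1 := by
      have : finrank k ↥(Submodule.span k (Set.range v)) = Fintype.card ↥(s : Set ↥(A.prod B)) :=
        finrank_span_eq_card hliv
      have e1 : finrank k ↥E'' = finrank k ↥(E''.toSubmodule) := rfl
      have e2 : finrank k ↥(E''.toSubmodule) = finrank k ↥(Submodule.span k (Set.range v)) :=
        congrArg (fun S : Submodule k (L × M) => finrank k ↥S) hE''S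
      rw [e1, e2, this, ← hcard]
      exact (Fintype.card_coe s)
    omega
  -- `E ≤ A.prod B` and maximality forces equality of submodules
  have hle : E.toSubmodule ≤ A.prod B := by
    intro x hx
    exact ⟨(hmemA x.1).2 ⟨x, hx, rfl⟩, (hmemB x.2).2 ⟨x, hx, rfl⟩⟩
  obtain ⟨E'', hE''S, hE''elem⟩ := mkElem _ le_rfl
  have hfinle : finrank k ↥(A.prod B) ≤ finrank k E := by
    have h := hmax E'' hE''elem
    have e1 : finrank k ↥E'' = finrank k ↥(E''.toSubmodule) := rfl
    have e2 : finrank k ↥(E''.toSubmodule) = finrank k ↥(A.prod B) :=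
      congrArg (fun S : Submodule k (L × M) => finrank k ↥S) hE''S
    rw [e1, e2] at h
    exact h
  have heq : E.toSubmodule = A.prod B := Submodule.eq_of_le_of_finrank_le hle hfinle
  have : (E : Set (L × M)) = ((A.prod B : Submodule k (L × M)) : Set (L × M)) := by
    rw [← heq]; rfl
  rw [this]
  ext x
  simp [Submodule.mem_prod, Set.mem_prod, hA, hB]
end

section
/- Let g and h be finite-dimensional restricted Lie algebras over a field of characteristic p, and let r and s be the maximal dimensions of elementary subalgebras of g and h respectively. Then the maximal dimension of an elementary subalgebra of g ⊕ h is r + s. -/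
set_option autoImplicit false

open Module

variable (p : ℕ) (k : Type*) {L M : Type*}

section Aux

variable {k : Type*} [Field k] {L M : Type*}
  [AddCommGroup L] [Module k L] [AddCommGroup M] [Module k M]

/-- The product of two submodules is linearly equivalent to the product. -/
def submoduleProdEquiv (E : Submodule k L) (F : Submodule k M) :
    ↥(E.prod F) ≃ₗ[k] E × F where
  toFun x := (⟨x.1.1, x.2.1⟩, ⟨x.1.2, x.2.2⟩)
  invFun y := ⟨(y.1.1, y.2.1), ⟨y.1.2, y.2.2⟩⟩
  left_inv x := rfl
  right_inv y := rfl
  map_add' x y := rfl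
  map_smul' c x := rfl

theorem finrank_submodule_prod (E : Submodule k L) (F : Submodule k M)
    [FiniteDimensional k L] [FiniteDimensional k M] :
    Module.finrank k ↥(E.prod F) = Module.finrank k E + Module.finrank k F := by
  rw [(submoduleProdEquiv E F).finrank_eq, Module.finrank_prod]

end Aux

/-- If `r` and `s` are the maximal dimensions of elementary subalgebras of the
finite-dimensional restricted Lie algebras `g` and `h`, then the maximal dimension of an
elementary subalgebra of `g ⊕ h` is `r + s`. -/
theorem max_elementary_dim_prod
    {p : ℕ} (hp : 0 < p) {k L M : Type*} [Field k] [CharP k p]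
    [LieRing L] [LieAlgebra k L] [LieRing M] [LieAlgebra k M]
    [FiniteDimensional k L] [FiniteDimensional k M]
    [RestrictedLieAlgebra p k L] [RestrictedLieAlgebra p k M]
    (r s : ℕ)
    (hr₁ : ∃ E : LieSubalgebra k L, E.IsElementary p ∧ Module.finrank k E = r)
    (hr₂ : ∀ E : LieSubalgebra k L, E.IsElementary p → Module.finrank k E ≤ r)
    (hs₁ : ∃ F : LieSubalgebra k M, F.IsElementary p ∧ Module.finrank k F = s)
    (hs₂ : ∀ F : LieSubalgebra k M, F.IsElementary p → Module.finrank k F ≤ s) :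
    (∃ E : LieSubalgebra k (L × M), E.IsElementary p ∧ Module.finrank k E = r + s) ∧
      ∀ E : LieSubalgebra k (L × M), E.IsElementary p → Module.finrank k E ≤ r + s := by
  constructor
  · obtain ⟨E, ⟨hEab, hEp⟩, hEr⟩ := hr₁
    obtain ⟨F, ⟨hFab, hFp⟩, hFs⟩ := hs₁
    refine ⟨{ (E : Submodule k L).prod (F : Submodule k M) with
        lie_mem' := ?_ }, ⟨?_, ?_⟩, ?_⟩
    · intro x y hx hy
      exact ⟨E.lie_mem hx.1 hy.1, F.lie_mem hx.2 hy.2⟩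
    · intro x hx y hy
      exact Prod.ext (hEab _ hx.1 _ hy.1) (hFab _ hx.2 _ hy.2)
    · intro x hx
      exact Prod.ext (hEp _ hx.1) (hFp _ hx.2)
    · show Module.finrank k ↥((E : Submodule k L).prod (F : Submodule k M)) = r + s
      rw [finrank_submodule_prod]
      exact congrArg₂ (· + ·) hEr hFs
  · intro E ⟨hEab, hEp⟩
    -- images under the two projections are elementary
    have h1 : (E.map (fstLieHom (k := k) (L := L) (M := M))).IsElementary p := by
      constructor
      · rintro x ⟨a, ha, rfl⟩ y ⟨b, hb, rfl⟩
        have := hEab a ha b hb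
        exact congrArg Prod.fst this
      · rintro x ⟨a, ha, rfl⟩
        exact congrArg Prod.fst (hEp a ha)
    have h2 : (E.map (sndLieHom (k := k) (L := L) (M := M))).IsElementary p := by
      constructor
      · rintro x ⟨a, ha, rfl⟩ y ⟨b, hb, rfl⟩
        exact congrArg Prod.snd (hEab a ha b hb)
      · rintro x ⟨a, ha, rfl⟩
        exact congrArg Prod.snd (hEp a ha)
    have hle : (E : Submodule k (L × M)) ≤
        ((E.map (fstLieHom (k := k))) : Submodule k L).prod
          ((E.map (sndLieHom (k := k))) : Submodule k M) := by
      intro x hx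
      exact ⟨⟨x, hx, rfl⟩, ⟨x, hx, rfl⟩⟩
    calc Module.finrank k E
        ≤ Module.finrank k ↥(((E.map (fstLieHom (k := k))) : Submodule k L).prod
            ((E.map (sndLieHom (k := k))) : Submodule k M)) :=
          Submodule.finrank_mono hle
      _ = Module.finrank k (E.map (fstLieHom (k := k)))
            + Module.finrank k (E.map (sndLieHom (k := k))) :=
          finrank_submodule_prod _ _
      _ ≤ r + s := add_le_add (hr₂ _ h1) (hs₂ _ h2)
end

section
/- In the root system of type A_{2n+1} (with n ≥ 0) with the standard base α_1, …, α_{2n+1}, the set Φ^rad(n+1) of positive roots whose coefficient on α_{n+1} is nonzero is, up to equality, the unique maximal-cardinality set of pairwise commuting positive roots, and it has (n+1)² elements. -/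
set_option autoImplicit false

namespace TypeAOdd

variable (n : ℕ)

/-- The standard basis vector `ε i` of `ℝ^{2n+2}` (with integer coordinates). -/
def eps (i : Fin (2 * n + 2)) : Fin (2 * n + 2) → ℤ := Pi.single i 1

/-- The root system of type `A_{2n+1}`: the vectors `ε_i − ε_j` for `i ≠ j`. -/
def Phi : Set (Fin (2 * n + 2) → ℤ) :=
  {x | ∃ i j : Fin (2 * n + 2), i ≠ j ∧ x = eps n i - eps n j}

/-- The positive roots `ε_i − ε_j` with `i < j`. -/
def PhiPos : Set (Fin (2 * n + 2) → ℤ) :=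
  {x | ∃ i j : Fin (2 * n + 2), i < j ∧ x = eps n i - eps n j}

/-- `Φ^rad(n+1)` (Bourbaki numbering): the positive roots whose coefficient on the middle
simple root `α_{n+1} = ε_{n+1} − ε_{n+2}` is nonzero, i.e. the `ε_i − ε_j` with
`i ≤ n+1 ≤ n+1 < j` (here indexed from `0`, so `i.val ≤ n < j.val`). -/
def PhiRadMid : Set (Fin (2 * n + 2) → ℤ) :=
  {x | ∃ i j : Fin (2 * n + 2), i.val ≤ n ∧ n < j.val ∧ x = eps n i - eps n j}

lemma eps_sub_apply (i j k : Fin (2 * n + 2)) :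
    (eps n i - eps n j) k = (if k = i then 1 else 0) - (if k = j then 1 else 0) := by
  simp [eps, Pi.single_apply]

lemma root_inj {i j k l : Fin (2 * n + 2)} (hij : i ≠ j) (hkl : k ≠ l)
    (h : eps n i - eps n j = eps n k - eps n l) : i = k ∧ j = l := by
  have h1 := congrFun h i
  have h2 := congrFun h j
  rw [eps_sub_apply, eps_sub_apply] at h1 h2
  rw [if_pos rfl, if_neg hij] at h1
  rw [if_neg (Ne.symm hij), if_pos rfl] at h2
  constructor
  · by_contra hik
    rw [if_neg hik] at h1
    split_ifs at h1 <;> omega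
  · by_contra hjl
    rw [if_neg hjl] at h2
    split_ifs at h2 <;> omega

lemma Phi_mem_bound {x : Fin (2 * n + 2) → ℤ} (hx : x ∈ Phi n) (k : Fin (2 * n + 2)) :
    -1 ≤ x k ∧ x k ≤ 1 := by
  obtain ⟨p, q, hpq, rfl⟩ := hx
  rw [eps_sub_apply]
  split_ifs <;> omega

lemma Phi_mem_one {x : Fin (2 * n + 2) → ℤ} (hx : x ∈ Phi n) {a b : Fin (2 * n + 2)}
    (ha : x a = 1) (hb : x b = 1) : a = b := by
  obtain ⟨p, q, hpq, rfl⟩ := hx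
  rw [eps_sub_apply] at ha hb
  have hap : a = p := by
    by_contra h
    rw [if_neg h] at ha
    split_ifs at ha <;> omega
  have hbp : b = p := by
    by_contra h
    rw [if_neg h] at hb
    split_ifs at hb <;> omega
  rw [hap, hbp]

lemma sum_not_root {i j k l : Fin (2 * n + 2)} (hij : i < j) (hkl : k < l)
    (hjk : j ≠ k) (hli : l ≠ i) :
    eps n i - eps n j + (eps n k - eps n l) ∉ Phi n := by
  intro hx
  by_cases hik : i = k
  · have hil : i ≠ l := by rw [hik]; exact ne_of_lt hkl
    have hb := (Phi_mem_bound n hx i).2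
    rw [Pi.add_apply, eps_sub_apply, eps_sub_apply, if_pos rfl, if_neg (ne_of_lt hij),
      if_pos hik, if_neg hil] at hb
    omega
  · by_cases hjl : j = l
    · have hb := (Phi_mem_bound n hx j).1
      rw [Pi.add_apply, eps_sub_apply, eps_sub_apply, if_neg (Ne.symm (ne_of_lt hij)),
        if_pos rfl, if_neg hjk, if_pos hjl] at hb
      omega
    · have ha : (eps n i - eps n j + (eps n k - eps n l)) i = 1 := by
        rw [Pi.add_apply, eps_sub_apply, eps_sub_apply, if_pos rfl, if_neg (ne_of_lt hij),
          if_neg hik, if_neg (Ne.symm hli)]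
        ring
      have hb : (eps n i - eps n j + (eps n k - eps n l)) k = 1 := by
        rw [Pi.add_apply, eps_sub_apply, eps_sub_apply, if_neg (Ne.symm hik),
          if_neg (Ne.symm hjk), if_pos rfl, if_neg (ne_of_lt hkl)]
        ring
      exact hik (Phi_mem_one n hx ha hb)

lemma sum_root_of_eq {i j l : Fin (2 * n + 2)} (hij : i < j) (hjl : j < l) :
    eps n i - eps n j + (eps n j - eps n l) ∈ Phi n :=
  ⟨i, l, ne_of_lt (hij.trans hjl), by ring⟩

lemma rt_injOn : Set.InjOn (fun p : Fin (2 * n + 2) × Fin (2 * n + 2) => eps n p.1 - eps n p.2)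
    {p | p.1 < p.2} := by
  intro p hp q hq h
  obtain ⟨h1, h2⟩ := root_inj n (ne_of_lt hp) (ne_of_lt hq) h
  exact Prod.ext h1 h2

lemma card_low :
    (Finset.univ.filter (fun i : Fin (2 * n + 2) => i.val ≤ n)).card = n + 1 := by
  have h : (Finset.univ.filter (fun i : Fin (2 * n + 2) => i.val ≤ n)) =
      Finset.Iio (⟨n + 1, by omega⟩ : Fin (2 * n + 2)) := by
    ext i
    simp [Fin.lt_def, Nat.lt_succ_iff]
  rw [h, Fin.card_Iio]

lemma card_high :
    (Finset.univ.filter (fun j : Fin (2 * n + 2) => n < j.val)).card = n + 1 := by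
  have h : (Finset.univ.filter (fun j : Fin (2 * n + 2) => n < j.val)) =
      Finset.Ioi (⟨n, by omega⟩ : Fin (2 * n + 2)) := by
    ext j
    simp [Fin.lt_def]
  rw [h, Fin.card_Ioi]
  simp only [Fin.val_mk]
  omega

lemma phiRadMid_eq_image :
    PhiRadMid n = ↑(((Finset.univ.filter (fun i : Fin (2 * n + 2) => i.val ≤ n)) ×ˢ
      (Finset.univ.filter (fun j : Fin (2 * n + 2) => n < j.val))).image
      (fun p => eps n p.1 - eps n p.2)) := by
  ext x
  simp only [PhiRadMid, Set.mem_setOf_eq, Finset.coe_image, Set.mem_image, Finset.mem_coe,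
    Finset.mem_product, Finset.mem_filter, Finset.mem_univ, true_and]
  constructor
  · rintro ⟨i, j, hi, hj, rfl⟩
    exact ⟨(i, j), ⟨hi, hj⟩, rfl⟩
  · rintro ⟨⟨i, j⟩, ⟨hi, hj⟩, rfl⟩
    exact ⟨i, j, hi, hj, rfl⟩

lemma main_bound {R : Set (Fin (2 * n + 2) → ℤ)} (hR : R ⊆ PhiPos n)
    (hcom : R.Pairwise fun a b => a + b ∉ Phi n) :
    R.ncard ≤ (n + 1) ^ 2 ∧ (R.ncard = (n + 1) ^ 2 → R = PhiRadMid n) := by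
  classical
  set P : Finset (Fin (2 * n + 2) × Fin (2 * n + 2)) :=
    Finset.univ.filter (fun p => p.1 < p.2 ∧ eps n p.1 - eps n p.2 ∈ R) with hPdef
  have memP : ∀ p : Fin (2 * n + 2) × Fin (2 * n + 2),
      p ∈ P ↔ p.1 < p.2 ∧ eps n p.1 - eps n p.2 ∈ R := by
    intro p
    simp [hPdef]
  have hRP : R = ↑(P.image (fun p => eps n p.1 - eps n p.2)) := by
    ext x
    constructor
    · intro hx
      obtain ⟨i, j, hij, rfl⟩ := hR hx
      exact Finset.mem_coe.2 (Finset.mem_image.2 ⟨(i, j), (memP (i, j)).2 ⟨hij, hx⟩, rfl⟩)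
    · intro hx
      obtain ⟨p, hp, rfl⟩ := Finset.mem_image.1 (Finset.mem_coe.1 hx)
      exact ((memP p).1 hp).2
  have hcard : R.ncard = P.card := by
    rw [hRP, Set.ncard_coe_finset, Finset.card_image_of_injOn
      ((rt_injOn n).mono (fun p hp => ((memP p).1 hp).1))]
  set F := P.image Prod.fst with hFdef
  set S := P.image Prod.snd with hSdef
  have hdisj : Disjoint F S := by
    rw [Finset.disjoint_left]
    intro a haF haS
    obtain ⟨p, hp, hpa⟩ := Finset.mem_image.1 haF
    obtain ⟨q, hq, hqa⟩ := Finset.mem_image.1 haS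
    have hp' := (memP p).1 hp
    have hq' := (memP q).1 hq
    have hq2p1 : q.2 = p.1 := hqa.trans hpa.symm
    have hroot : eps n q.1 - eps n q.2 + (eps n p.1 - eps n p.2) ∈ Phi n := by
      rw [hq2p1]
      exact sum_root_of_eq n (hq2p1 ▸ hq'.1) hp'.1
    have hne : eps n q.1 - eps n q.2 ≠ eps n p.1 - eps n p.2 := by
      intro h
      obtain ⟨h1, h2⟩ := root_inj n (ne_of_lt hq'.1) (ne_of_lt hp'.1) h
      exact ne_of_lt hp'.1 (hpa.trans (hqa.symm.trans h2))
    exact (hcom hq'.2 hp'.2 hne) hroot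
  have hPsub : P ⊆ F ×ˢ S := by
    intro p hp
    exact Finset.mem_product.2 ⟨Finset.mem_image_of_mem _ hp, Finset.mem_image_of_mem _ hp⟩
  have hcards : F.card + S.card ≤ 2 * n + 2 := by
    have h := Finset.card_le_univ (F ∪ S)
    rw [Finset.card_union_of_disjoint hdisj] at h
    simpa using h
  have hPle : P.card ≤ F.card * S.card := by
    calc P.card ≤ (F ×ˢ S).card := Finset.card_le_card hPsub
      _ = F.card * S.card := Finset.card_product F S
  have hprod : F.card * S.card ≤ (n + 1) ^ 2 := by
    have h1 : (F.card : ℤ) + S.card ≤ 2 * n + 2 := by exact_mod_cast hcards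
    have h2 : (F.card : ℤ) * S.card ≤ ((n : ℤ) + 1) ^ 2 := by
      nlinarith [sq_nonneg ((F.card : ℤ) - S.card)]
    exact_mod_cast h2
  constructor
  · rw [hcard]; exact le_trans hPle hprod
  · intro hceq
    rw [hcard] at hceq
    have hfs : F.card * S.card = (n + 1) ^ 2 := le_antisymm hprod (hceq ▸ hPle)
    have hPeq : P = F ×ˢ S :=
      Finset.eq_of_subset_of_card_le hPsub
        (le_of_eq (by rw [Finset.card_product, hfs, ← hceq]))
    have hf : F.card = n + 1 := by
      have h2 : (F.card : ℤ) * S.card = ((n : ℤ) + 1) ^ 2 := by exact_mod_cast hfs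
      have h3 : (F.card : ℤ) + S.card ≤ 2 * n + 2 := by exact_mod_cast hcards
      have h1 : ((F.card : ℤ) - (n + 1)) ^ 2 ≤ 0 := by
        nlinarith [mul_nonneg (Int.natCast_nonneg F.card)
          (show (0 : ℤ) ≤ 2 * n + 2 - F.card - S.card by linarith)]
      have h5 : ((F.card : ℤ) - (n + 1)) ^ 2 = 0 := le_antisymm h1 (sq_nonneg _)
      have h6 := sq_eq_zero_iff.mp h5
      have : (F.card : ℤ) = n + 1 := by linarith
      exact_mod_cast this
    rw [hf, sq] at hfs
    have hs : S.card = n + 1 := Nat.eq_of_mul_eq_mul_left (Nat.succ_pos n) hfs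
    have hFsub : F ⊆ Finset.univ.filter (fun i : Fin (2 * n + 2) => i.val ≤ n) := by
      intro i hi
      simp only [Finset.mem_filter, Finset.mem_univ, true_and]
      have hSsub : S ⊆ Finset.Ioi i := by
        intro j hj
        have hmem : (i, j) ∈ P := by
          rw [hPeq]
          exact Finset.mem_product.2 ⟨hi, hj⟩
        exact Finset.mem_Ioi.2 ((memP (i, j)).1 hmem).1
      have h := Finset.card_le_card hSsub
      rw [hs, Fin.card_Ioi] at h
      omega
    have hSsub' : S ⊆ Finset.univ.filter (fun j : Fin (2 * n + 2) => n < j.val) := by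
      intro j hj
      simp only [Finset.mem_filter, Finset.mem_univ, true_and]
      have hFsub2 : F ⊆ Finset.Iio j := by
        intro i hi
        have hmem : (i, j) ∈ P := by
          rw [hPeq]
          exact Finset.mem_product.2 ⟨hi, hj⟩
        exact Finset.mem_Iio.2 ((memP (i, j)).1 hmem).1
      have h := Finset.card_le_card hFsub2
      rw [hf, Fin.card_Iio] at h
      omega
    have hFeq : F = Finset.univ.filter (fun i : Fin (2 * n + 2) => i.val ≤ n) :=
      Finset.eq_of_subset_of_card_le hFsub (le_of_eq (by rw [card_low n, hf]))
    have hSeq : S = Finset.univ.filter (fun j : Fin (2 * n + 2) => n < j.val) :=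
      Finset.eq_of_subset_of_card_le hSsub' (le_of_eq (by rw [card_high n, hs]))
    rw [hRP, hPeq, hFeq, hSeq, phiRadMid_eq_image n]

/-- In type `A_{2n+1}`, the set `Φ^rad(n+1)` is a set of pairwise commuting positive roots
of cardinality `(n+1)²`, every set of pairwise commuting positive roots has at most
`(n+1)²` elements, and `Φ^rad(n+1)` is the unique such set attaining this bound. -/
theorem phiRadMid_unique_max :
    (PhiRadMid n ⊆ PhiPos n ∧ (PhiRadMid n).Pairwise fun a b => a + b ∉ Phi n) ∧
    (PhiRadMid n).ncard = (n + 1) ^ 2 ∧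
    ∀ R ⊆ PhiPos n, (R.Pairwise fun a b => a + b ∉ Phi n) →
      R.ncard ≤ (n + 1) ^ 2 ∧ (R.ncard = (n + 1) ^ 2 → R = PhiRadMid n) := by
  refine ⟨⟨?_, ?_⟩, ?_, fun R hR hcom => main_bound n hR hcom⟩
  · rintro x ⟨i, j, hi, hj, rfl⟩
    exact ⟨i, j, Fin.lt_def.2 (by omega), rfl⟩
  · rintro x ⟨i, j, hi, hj, rfl⟩ y ⟨k, l, hk, hl, rfl⟩ hne
    exact sum_not_root n (Fin.lt_def.2 (by omega)) (Fin.lt_def.2 (by omega))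
      (fun h => by rw [h] at hj; omega) (fun h => by rw [h] at hl; omega)
  · rw [phiRadMid_eq_image n, Set.ncard_coe_finset, Finset.card_image_of_injOn
      ((rt_injOn n).mono ?_), Finset.card_product, card_low, card_high, sq]
    intro p hp
    simp only [Finset.coe_product, Finset.coe_filter, Set.mem_prod, Set.mem_setOf_eq,
      Finset.mem_univ, true_and] at hp
    exact Fin.lt_def.2 (by omega)
  done
end TypeAOdd
end

section
/- In the root system of type A_{2n} (n ≥ 1), the maximal cardinality of a set of pairwise commuting positive roots is n(n+1), and the sets attaining this maximum are exactly Φ^rad(n) and Φ^rad(n+1). -/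
set_option autoImplicit false

namespace TypeAEven

variable (n : ℕ)

/-- The standard basis vector `ε i` of `ℝ^{2n+1}` (with integer coordinates). -/
def eps (i : Fin (2 * n + 1)) : Fin (2 * n + 1) → ℤ := Pi.single i 1

/-- The root system of type `A_{2n}`: the vectors `ε_i − ε_j` for `i ≠ j`. -/
def Phi : Set (Fin (2 * n + 1) → ℤ) :=
  {x | ∃ i j : Fin (2 * n + 1), i ≠ j ∧ x = eps n i - eps n j}

/-- The positive roots `ε_i − ε_j` with `i < j`. -/
def PhiPos : Set (Fin (2 * n + 1) → ℤ) :=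
  {x | ∃ i j : Fin (2 * n + 1), i < j ∧ x = eps n i - eps n j}

/-- `Φ^rad(k)` for the simple root `α_k = ε_k − ε_{k+1}` (indexed from `0`, so Bourbaki's
`α_m` corresponds to `k = m - 1`): the positive roots `ε_i − ε_j` with `i ≤ k < j`. -/
def PhiRad (k : ℕ) : Set (Fin (2 * n + 1) → ℤ) :=
  {x | ∃ i j : Fin (2 * n + 1), i.val ≤ k ∧ k < j.val ∧ x = eps n i - eps n j}

/-! ### Auxiliary definitions and lemmas -/

def root (i j : Fin (2*n+1)) : Fin (2*n+1) → ℤ := eps n i - eps n j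

lemma root_apply (i j t : Fin (2*n+1)) :
    root n i j t = (if t.val = i.val then 1 else 0) - (if t.val = j.val then 1 else 0) := by
  simp [root, eps, Pi.single_apply, Fin.ext_iff]

lemma root_inj {i j k l : Fin (2*n+1)} (hij : i ≠ j) (hkl : k ≠ l)
    (h : root n i j = root n k l) : i = k ∧ j = l := by
  have h1 := congrFun h i
  have h2 := congrFun h j
  simp only [root_apply, if_true] at h1 h2
  rw [Fin.ne_iff_vne] at hij hkl
  refine ⟨Fin.ext ?_, Fin.ext ?_⟩ <;> split_ifs at h1 h2 <;> omega

lemma sum_mem {i j k l : Fin (2*n+1)} (hij : i < j) (hkl : k < l) (h : j = k) :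
    root n i j + root n k l ∈ Phi n := by
  subst h
  refine ⟨i, l, (hij.trans hkl).ne, ?_⟩
  show _ = root n i l
  unfold root
  abel

lemma pos_coord {p q t : Fin (2*n+1)} (h : 0 < root n p q t) : t = p := by
  simp only [root_apply] at h
  apply Fin.ext
  split_ifs at h <;> omega

lemma le_one_coord (p q t : Fin (2*n+1)) : root n p q t ≤ 1 := by
  simp only [root_apply]
  split_ifs <;> omega

lemma sum_not_mem {i j k l : Fin (2*n+1)} (hij : i < j) (hkl : k < l)
    (hjk : j ≠ k) (hli : l ≠ i) : root n i j + root n k l ∉ Phi n := by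
  rintro ⟨p, q, hpq, hx⟩
  have hx' : root n p q = root n i j + root n k l := hx.symm
  rw [Fin.lt_def] at hij hkl
  rw [Fin.ne_iff_vne] at hjk hli
  have v1 : root n i j i = 1 := by simp only [root_apply]; split_ifs <;> omega
  have v2 : 0 ≤ root n k l i := by simp only [root_apply]; split_ifs <;> omega
  have v3 : root n k l k = 1 := by simp only [root_apply]; split_ifs <;> omega
  have v4 : 0 ≤ root n i j k := by simp only [root_apply]; split_ifs <;> omega
  have hpi : i = p := pos_coord n (by rw [hx', Pi.add_apply, v1]; omega)
  have hpk : k = p := pos_coord n (by rw [hx', Pi.add_apply, v3]; omega)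
  have hik : i = k := hpi.trans hpk.symm
  have h2 : root n p q i = 2 := by rw [hx', Pi.add_apply, v1, hik, v3]; norm_num
  have := le_one_coord n p q i
  omega

/-! ### Counting lemmas on `Fin` -/

lemma card_filter_lt (M a : ℕ) (ha : a ≤ M) :
    (Finset.univ.filter (fun x : Fin M => x.val < a)).card = a := by
  rw [← Finset.card_range a]
  apply Finset.card_bij (fun x _ => x.val)
  · intro x hx; simp at hx ⊢; exact hx
  · intro x hx y hy h; exact Fin.ext h
  · intro b hb
    simp at hb
    exact ⟨⟨b, lt_of_lt_of_le hb ha⟩, by simp [hb], rfl⟩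

lemma card_filter_ge (M a : ℕ) (ha : a ≤ M) :
    (Finset.univ.filter (fun x : Fin M => a ≤ x.val)).card = M - a := by
  classical
  have h := Finset.card_filter_add_card_filter_not
    (s := (Finset.univ : Finset (Fin M))) (p := fun x : Fin M => x.val < a)
  simp only [not_lt, Finset.card_univ, Fintype.card_fin, card_filter_lt M a ha] at h
  omega

lemma key (n a b : ℤ) (hn : 1 ≤ n) (h0a : 0 ≤ a) (h0b : 0 ≤ b)
    (h1 : a * b = n * (n + 1)) (h2 : a + b ≤ 2 * n + 1) :
    (a = n ∧ b = n + 1) ∨ (a = n + 1 ∧ b = n) := by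
  have ha1 : 1 ≤ a := by nlinarith
  have hb1 : 1 ≤ b := by nlinarith
  have hub : a * b ≤ a * (2 * n + 1 - a) := by nlinarith
  have hna : n ≤ a := by nlinarith
  have han : a ≤ n + 1 := by nlinarith
  have : a = n ∨ a = n + 1 := by omega
  rcases this with rfl | rfl
  · left; refine ⟨rfl, ?_⟩; nlinarith
  · right; refine ⟨rfl, ?_⟩; nlinarith

lemma dc_eq {M : ℕ} (S : Finset (Fin M)) (hdc : ∀ x y : Fin M, x ≤ y → y ∈ S → x ∈ S) :
    S = Finset.univ.filter (fun x => x.val < S.card) := by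
  have hSM : S.card ≤ M := by
    have := Finset.card_le_univ S
    simpa using this
  have hsub : Finset.univ.filter (fun x : Fin M => x.val < S.card) ⊆ S := by
    intro x hx
    simp only [Finset.mem_filter, Finset.mem_univ, true_and] at hx
    by_contra hxS
    have hS' : S ⊆ Finset.univ.filter (fun y : Fin M => y.val < x.val) := by
      intro s hs
      simp only [Finset.mem_filter, Finset.mem_univ, true_and]
      by_contra h
      push_neg at h
      exact hxS (hdc x s (by rwa [Fin.le_def]) hs)
    have := Finset.card_le_card hS'
    rw [card_filter_lt M x.val x.isLt.le] at this
    omega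
  refine (Finset.eq_of_subset_of_card_le hsub ?_).symm
  rw [card_filter_lt M S.card hSM]

/-! ### The combinatorial core -/

theorem core (hn : 1 ≤ n) (P : Finset (Fin (2*n+1) × Fin (2*n+1)))
    (hlt : ∀ p ∈ P, p.1 < p.2)
    (hcomm : ∀ p ∈ P, ∀ q ∈ P, p.2 ≠ q.1) :
    P.card ≤ n * (n+1) ∧ (P.card = n * (n+1) →
      P = Finset.univ.filter (fun p => p.1.val < n ∧ n ≤ p.2.val) ∨
      P = Finset.univ.filter (fun p => p.1.val < n+1 ∧ n+1 ≤ p.2.val)) := by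
  classical
  set S := P.image Prod.fst with hS
  set T := P.image Prod.snd with hT
  have hdisj : Disjoint S T := by
    rw [Finset.disjoint_left]
    rintro x hxS hxT
    simp only [hS, hT, Finset.mem_image] at hxS hxT
    obtain ⟨p, hp, hp1⟩ := hxS
    obtain ⟨q, hq, hq2⟩ := hxT
    exact hcomm q hq p hp (hq2.trans hp1.symm)
  have hsub : P ⊆ S ×ˢ T := by
    intro p hp
    rw [Finset.mem_product]
    exact ⟨Finset.mem_image_of_mem _ hp, Finset.mem_image_of_mem _ hp⟩
  have hcard1 : P.card ≤ S.card * T.card := by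
    have := Finset.card_le_card hsub
    rwa [Finset.card_product] at this
  have hm : S.card + T.card ≤ 2*n+1 := by
    have h1 := Finset.card_le_univ (S ∪ T)
    rw [Finset.card_union_of_disjoint hdisj] at h1
    simpa using h1
  have hab : S.card * T.card ≤ n * (n+1) := by
    have : (S.card : ℤ) * T.card ≤ (n : ℤ) * (n+1) := by
      have hm' : (S.card : ℤ) + T.card ≤ 2*n+1 := by exact_mod_cast hm
      nlinarith [sq_nonneg ((S.card : ℤ) - T.card)]
    exact_mod_cast this
  refine ⟨hcard1.trans hab, fun heq => ?_⟩
  have e2 : S.card * T.card = n * (n+1) := le_antisymm hab (heq ▸ hcard1)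
  have ePfull : P = S ×ˢ T := by
    apply Finset.eq_of_subset_of_card_le hsub
    rw [Finset.card_product]
    omega
  have hA : (S.card = n ∧ T.card = n+1) ∨ (S.card = n+1 ∧ T.card = n) := by
    have := key (n : ℤ) S.card T.card (by exact_mod_cast hn) (Int.natCast_nonneg _) (Int.natCast_nonneg _)
      (by exact_mod_cast e2) (by exact_mod_cast hm)
    rcases this with ⟨h1, h2⟩ | ⟨h1, h2⟩
    · left; constructor <;> [exact_mod_cast h1; exact_mod_cast h2]
    · right; constructor <;> [exact_mod_cast h1; exact_mod_cast h2]
  have hall : ∀ s ∈ S, ∀ t ∈ T, s < t := by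
    intro s hs t ht
    have : (s, t) ∈ P := by rw [ePfull, Finset.mem_product]; exact ⟨hs, ht⟩
    exact hlt _ this
  have hUT : S ∪ T = Finset.univ := by
    apply Finset.eq_univ_of_card
    rw [Finset.card_union_of_disjoint hdisj]
    simp only [Fintype.card_fin]
    omega
  have hdc : ∀ x y : Fin (2*n+1), x ≤ y → y ∈ S → x ∈ S := by
    intro x y hxy hy
    by_contra hx
    have hxT : x ∈ T := by
      have : x ∈ S ∪ T := hUT ▸ Finset.mem_univ x
      rw [Finset.mem_union] at this
      tauto
    exact absurd (hall y hy x hxT) (not_lt.2 hxy)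
  have hSeq : S = Finset.univ.filter (fun x => x.val < S.card) := dc_eq S hdc
  have hTeq : T = Finset.univ.filter (fun x => S.card ≤ x.val) := by
    ext x
    have hx : x ∈ S ∪ T := hUT ▸ Finset.mem_univ x
    rw [Finset.mem_union] at hx
    have hnot : ¬ (x ∈ S ∧ x ∈ T) := fun ⟨h1, h2⟩ => Finset.disjoint_left.1 hdisj h1 h2
    simp only [Finset.mem_filter, Finset.mem_univ, true_and]
    constructor
    · intro hxT
      by_contra h
      push_neg at h
      exact hnot ⟨hSeq ▸ (by simp [Finset.mem_filter, h] :
        x ∈ Finset.univ.filter (fun x => x.val < S.card)), hxT⟩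
    · intro h
      rcases hx with hxS | hxT
      · rw [hSeq, Finset.mem_filter] at hxS; omega
      · exact hxT
  rcases hA with ⟨h1, _⟩ | ⟨h1, _⟩
  · left
    rw [ePfull, hSeq, hTeq, h1]
    ext p
    simp [Finset.mem_product]
  · right
    rw [ePfull, hSeq, hTeq, h1]
    ext p
    simp [Finset.mem_product]

/-! ### The correspondence between sets of roots and sets of pairs -/

open scoped Classical in
noncomputable def pairsOf (R : Set (Fin (2*n+1) → ℤ)) : Finset (Fin (2*n+1) × Fin (2*n+1)) :=
  Finset.univ.filter (fun p => p.1 < p.2 ∧ root n p.1 p.2 ∈ R)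

lemma mem_pairsOf {R : Set (Fin (2*n+1) → ℤ)} {p : Fin (2*n+1) × Fin (2*n+1)} :
    p ∈ pairsOf n R ↔ p.1 < p.2 ∧ root n p.1 p.2 ∈ R := by
  simp [pairsOf]

lemma image_pairsOf {R : Set (Fin (2*n+1) → ℤ)} (hR : R ⊆ PhiPos n) :
    R = ↑((pairsOf n R).image (fun p => root n p.1 p.2)) := by
  ext x
  simp only [Finset.coe_image, Set.mem_image, Finset.mem_coe, mem_pairsOf]
  constructor
  · intro hx
    obtain ⟨i, j, hij, rfl⟩ := hR hx
    exact ⟨(i, j), ⟨hij, hx⟩, rfl⟩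
  · rintro ⟨p, ⟨_, hmem⟩, rfl⟩
    exact hmem

lemma ncard_pairs {R : Set (Fin (2*n+1) → ℤ)} (hR : R ⊆ PhiPos n) :
    R.ncard = (pairsOf n R).card := by
  nth_rewrite 1 [image_pairsOf n hR]
  rw [Set.ncard_coe_finset]
  apply Finset.card_image_of_injOn
  intro p hp q hq h
  simp only [Finset.mem_coe, mem_pairsOf] at hp hq
  obtain ⟨h1, h2⟩ := root_inj n hp.1.ne hq.1.ne h
  exact Prod.ext h1 h2

lemma phiRad_pairs (k : ℕ) :
    PhiRad n k = ↑((Finset.univ.filter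
      (fun p : Fin (2*n+1) × Fin (2*n+1) => p.1.val ≤ k ∧ k < p.2.val)).image
      (fun p => root n p.1 p.2)) := by
  ext x
  simp only [PhiRad, Set.mem_setOf_eq, Finset.coe_image, Set.mem_image, Finset.mem_coe,
    Finset.mem_filter, Finset.mem_univ, true_and]
  constructor
  · rintro ⟨i, j, h1, h2, rfl⟩
    exact ⟨(i, j), ⟨h1, h2⟩, rfl⟩
  · rintro ⟨p, ⟨h1, h2⟩, rfl⟩
    exact ⟨p.1, p.2, h1, h2, rfl⟩

lemma ncard_phiRad (k : ℕ) (hk : k < 2*n+1) :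
    (PhiRad n k).ncard = (k+1) * (2*n - k) := by
  classical
  rw [phiRad_pairs, Set.ncard_coe_finset]
  rw [Finset.card_image_of_injOn]
  · have hsplit : (Finset.univ.filter
        (fun p : Fin (2*n+1) × Fin (2*n+1) => p.1.val ≤ k ∧ k < p.2.val)) =
        (Finset.univ.filter (fun x : Fin (2*n+1) => x.val < k+1)) ×ˢ
        (Finset.univ.filter (fun x : Fin (2*n+1) => k+1 ≤ x.val)) := by
      ext p
      simp only [Finset.mem_filter, Finset.mem_univ, true_and, Finset.mem_product]
      omega
    rw [hsplit, Finset.card_product, card_filter_lt _ _ hk,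
      card_filter_ge _ _ hk]
    congr 1
    omega
  · intro p hp q hq h
    simp only [Finset.mem_coe, Finset.mem_filter, Finset.mem_univ, true_and] at hp hq
    have hp' : p.1 < p.2 := Fin.lt_def.2 (by omega)
    have hq' : q.1 < q.2 := Fin.lt_def.2 (by omega)
    obtain ⟨h1, h2⟩ := root_inj n hp'.ne hq'.ne h
    exact Prod.ext h1 h2

lemma phiRad_subset (k : ℕ) : PhiRad n k ⊆ PhiPos n := by
  rintro x ⟨i, j, h1, h2, rfl⟩
  exact ⟨i, j, Fin.lt_def.2 (by omega), rfl⟩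

lemma phiRad_pairwise (k : ℕ) : (PhiRad n k).Pairwise (fun a b => a + b ∉ Phi n) := by
  rintro a ⟨i, j, hik, hkj, rfl⟩ b ⟨i', j', hik', hkj', rfl⟩ _
  show root n i j + root n i' j' ∉ Phi n
  exact sum_not_mem n (Fin.lt_def.2 (by omega)) (Fin.lt_def.2 (by omega))
    (by rw [Fin.ne_iff_vne]; omega) (by rw [Fin.ne_iff_vne]; omega)

/-- In type `A_{2n}` (`n ≥ 1`), the maximal cardinality of a set of pairwise commuting
positive roots is `n(n+1)`, and the sets attaining this maximum are exactly
`Φ^rad(n)` and `Φ^rad(n+1)` (Bourbaki numbering; indexed from `0` these are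
`PhiRad (n-1)` and `PhiRad n`). -/
theorem max_commuting_sets (hn : 1 ≤ n) :
    ((PhiRad n (n - 1) ⊆ PhiPos n ∧ (PhiRad n (n - 1)).Pairwise fun a b => a + b ∉ Phi n) ∧
     (PhiRad n n ⊆ PhiPos n ∧ (PhiRad n n).Pairwise fun a b => a + b ∉ Phi n)) ∧
    ∀ R ⊆ PhiPos n, (R.Pairwise fun a b => a + b ∉ Phi n) →
      R.ncard ≤ n * (n + 1) ∧
        (R.ncard = n * (n + 1) ↔ R = PhiRad n (n - 1) ∨ R = PhiRad n n) := by
  classical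
  refine ⟨⟨⟨phiRad_subset n _, phiRad_pairwise n _⟩, ⟨phiRad_subset n _, phiRad_pairwise n _⟩⟩, ?_⟩
  intro R hR hcomm
  have hlt : ∀ p ∈ pairsOf n R, p.1 < p.2 := fun p hp => ((mem_pairsOf n).1 hp).1
  have hmemR : ∀ p ∈ pairsOf n R, root n p.1 p.2 ∈ R := fun p hp => ((mem_pairsOf n).1 hp).2
  have hcomm' : ∀ p ∈ pairsOf n R, ∀ q ∈ pairsOf n R, p.2 ≠ q.1 := by
    intro p hp q hq h
    by_cases hpq : p = q
    · subst hpq; exact absurd h (hlt p hp).ne'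
    · have hne : root n p.1 p.2 ≠ root n q.1 q.2 := by
        intro he
        obtain ⟨e1, e2⟩ := root_inj n (hlt p hp).ne (hlt q hq).ne he
        exact hpq (Prod.ext e1 e2)
      exact hcomm (hmemR p hp) (hmemR q hq) hne (sum_mem n (hlt p hp) (hlt q hq) h)
  have hcore := core n hn (pairsOf n R) hlt hcomm'
  have hRc : R.ncard = (pairsOf n R).card := ncard_pairs n hR
  refine ⟨le_of_eq_of_le hRc hcore.1, ?_⟩
  constructor
  · intro h
    rw [hRc] at h
    rcases hcore.2 h with hP | hP
    · left
      have hfe : (Finset.univ.filter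
          (fun p : Fin (2*n+1) × Fin (2*n+1) => p.1.val < n ∧ n ≤ p.2.val)) =
          Finset.univ.filter (fun p => p.1.val ≤ n-1 ∧ n-1 < p.2.val) := by
        ext p
        simp only [Finset.mem_filter, Finset.mem_univ, true_and]
        omega
      rw [image_pairsOf n hR, hP, hfe, phiRad_pairs]
    · right
      have hfe : (Finset.univ.filter
          (fun p : Fin (2*n+1) × Fin (2*n+1) => p.1.val < n+1 ∧ n+1 ≤ p.2.val)) =
          Finset.univ.filter (fun p => p.1.val ≤ n ∧ n < p.2.val) := by
        ext p
        simp only [Finset.mem_filter, Finset.mem_univ, true_and]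
        omega
      rw [image_pairsOf n hR, hP, hfe, phiRad_pairs]
  · rintro (rfl | rfl)
    · rw [ncard_phiRad n (n-1) (by omega)]
      have h1 : n - 1 + 1 = n := by omega
      have h2 : 2*n - (n-1) = n + 1 := by omega
      rw [h1, h2]
    · rw [ncard_phiRad n n (by omega)]
      have h2 : 2*n - n = n := by omega
      rw [h2]
      ring

end TypeAEven
end

section
/- In the root system of type C_n (n ≥ 2), the maximal cardinality of a set of pairwise commuting positive roots is n(n+1)/2, and the unique set attaining this maximum is Φ^rad(n) = {ε_i + ε_j : 1 ≤ i ≤ j ≤ n}, the set of positive roots with nonzero coefficient on the long simple root α_n. -/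
set_option autoImplicit false

namespace TypeC

variable (n : ℕ)

/-- The standard basis vector `ε i` of `ℝ^n` (with integer coordinates). -/
def eps (i : Fin n) : Fin n → ℤ := Pi.single i 1

/-- The root system of type `C_n`: `±ε_i ± ε_j` for `i < j` together with `±2ε_i`. -/
def Phi : Set (Fin n → ℤ) :=
  {x | (∃ i j : Fin n, i ≠ j ∧
          (x = eps n i + eps n j ∨ x = eps n i - eps n j ∨ x = -(eps n i + eps n j))) ∨
       (∃ i : Fin n, x = (2 : ℤ) • eps n i ∨ x = -((2 : ℤ) • eps n i))}

/-- The positive roots: `ε_i + ε_j` and `ε_i − ε_j` for `i < j`, and `2ε_i`. -/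
def PhiPos : Set (Fin n → ℤ) :=
  {x | (∃ i j : Fin n, i < j ∧ (x = eps n i + eps n j ∨ x = eps n i - eps n j)) ∨
       (∃ i : Fin n, x = (2 : ℤ) • eps n i)}

/-- `Φ^rad(n)`, the positive roots with nonzero coefficient on the long simple root
`α_n = 2ε_n`: the set `{ε_i + ε_j : i ≤ j}`. -/
def PhiRad : Set (Fin n → ℤ) :=
  {x | ∃ i j : Fin n, i ≤ j ∧ x = eps n i + eps n j}

/-! ### Auxiliary lemmas -/

lemma eps_apply (i k : Fin n) : eps n i k = if k = i then 1 else 0 := Pi.single_apply i 1 k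

lemma sum_eps (i : Fin n) : ∑ m, eps n i m = 1 := by simp [eps]

lemma eps_inj {a b : Fin n} (h : eps n a = eps n b) : a = b := by
  by_cases hab : a = b
  · exact hab
  · have ha := congrFun h a
    simp [eps_apply, hab] at ha

lemma add_inj {i j k l : Fin n} (h : eps n i + eps n j = eps n k + eps n l) :
    (i = k ∧ j = l) ∨ (i = l ∧ j = k) := by
  have hik : i = k ∨ i = l := by
    by_contra h'
    push_neg at h'
    have hi := congrFun h i
    simp [eps_apply, h'.1, h'.2] at hi
    split_ifs at hi <;> omega
  rcases hik with rfl | rfl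
  · exact Or.inl ⟨rfl, eps_inj n (add_left_cancel h)⟩
  · right
    refine ⟨rfl, eps_inj n ?_⟩
    have h2 : eps n i + eps n j = eps n i + eps n k := by rw [h, add_comm]
    exact add_left_cancel h2

lemma add_ne_sub {i j k l : Fin n} (hkl : k ≠ l) :
    eps n i + eps n j ≠ eps n k - eps n l := by
  intro h
  have hl := congrFun h l
  have h1 : ¬ (l = k) := fun hh => hkl hh.symm
  simp [eps_apply, h1] at hl
  split_ifs at hl <;> omega

lemma sum_le_of_mem_Phi {x : Fin n → ℤ} (hx : x ∈ Phi n) : ∑ m, x m ≤ 2 := by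
  rcases hx with ⟨i, j, hij, rfl | rfl | rfl⟩ | ⟨i, rfl | rfl⟩ <;>
    simp [Finset.sum_add_distrib, Finset.sum_sub_distrib, sum_eps, ← Finset.mul_sum]

lemma sigma_sum_not_mem {i j k l : Fin n} :
    (eps n i + eps n j) + (eps n k + eps n l) ∉ Phi n := by
  intro h
  have := sum_le_of_mem_Phi n h
  simp [Finset.sum_add_distrib, sum_eps] at this

lemma two_eps_eq (i : Fin n) : (2 : ℤ) • eps n i = eps n i + eps n i := two_smul ℤ _

lemma add_mem_Phi {i j : Fin n} (hij : i ≠ j) : eps n i + eps n j ∈ Phi n :=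
  Or.inl ⟨i, j, hij, Or.inl rfl⟩

lemma smul_mem_Phi (i : Fin n) : eps n i + eps n i ∈ Phi n :=
  Or.inr ⟨i, Or.inl (two_eps_eq n i).symm⟩

/-- Normal form of positive roots. -/
lemma normal_form {x : Fin n → ℤ} (hx : x ∈ PhiPos n) :
    ∃ p : Fin n × Fin n, p.1 ≤ p.2 ∧
      (x = eps n p.1 + eps n p.2 ∨ (p.1 ≠ p.2 ∧ x = eps n p.1 - eps n p.2)) := by
  rcases hx with ⟨i, j, hij, rfl | rfl⟩ | ⟨i, rfl⟩
  · exact ⟨(i, j), le_of_lt hij, Or.inl rfl⟩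
  · exact ⟨(i, j), le_of_lt hij, Or.inr ⟨ne_of_lt hij, rfl⟩⟩
  · exact ⟨(i, i), le_refl i, Or.inl (two_eps_eq n i)⟩

lemma phiRad_subset : PhiRad n ⊆ PhiPos n := by
  rintro x ⟨i, j, hij, rfl⟩
  rcases lt_or_eq_of_le hij with h | rfl
  · exact Or.inl ⟨i, j, h, Or.inl rfl⟩
  · exact Or.inr ⟨i, (two_eps_eq n i).symm⟩

/-- The unordered-pair labelling of the radical roots. -/
noncomputable def G : Sym2 (Fin n) → (Fin n → ℤ) :=
  Sym2.lift ⟨fun i j => eps n i + eps n j, fun _ _ => add_comm _ _⟩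

lemma G_mk (i j : Fin n) : G n s(i, j) = eps n i + eps n j := rfl

lemma G_inj : Function.Injective (G n) := by
  intro s t h
  induction s using Sym2.ind with | _ i j =>
  induction t using Sym2.ind with | _ k l =>
  rw [G_mk, G_mk] at h
  rw [Sym2.eq_iff]
  exact add_inj n h

lemma range_G : Set.range (G n) = PhiRad n := by
  ext x
  constructor
  · rintro ⟨s, rfl⟩
    induction s using Sym2.ind with | _ i j =>
    rcases le_total i j with h | h
    · exact ⟨i, j, h, rfl⟩
    · exact ⟨j, i, h, by rw [G_mk, add_comm]⟩
  · rintro ⟨i, j, hij, rfl⟩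
    exact ⟨s(i, j), rfl⟩

lemma card_sym2 : Nat.card (Sym2 (Fin n)) = n * (n + 1) / 2 := by
  rw [Nat.card_eq_fintype_card, Sym2.card, Fintype.card_fin, Nat.choose_two_right]
  simp [Nat.mul_comm]

lemma phiRad_finite : (PhiRad n).Finite := by
  rw [← range_G]; exact Set.finite_range _

lemma ncard_phiRad : (PhiRad n).ncard = n * (n + 1) / 2 := by
  rw [← range_G, ← Set.image_univ, Set.ncard_image_of_injective _ (G_inj n),
    Set.ncard_univ, card_sym2]

/-- The labelling of an arbitrary positive root by an unordered pair. -/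
noncomputable def pick (hn : 0 < n) (x : Fin n → ℤ) : Sym2 (Fin n) :=
  if h : ∃ p : Fin n × Fin n, p.1 ≤ p.2 ∧
      (x = eps n p.1 + eps n p.2 ∨ (p.1 ≠ p.2 ∧ x = eps n p.1 - eps n p.2)) then
    Sym2.mk h.choose.1 h.choose.2
  else s(⟨0, hn⟩, ⟨0, hn⟩)

lemma pick_spec (hn : 0 < n) {x : Fin n → ℤ} (hx : x ∈ PhiPos n) :
    ∃ p : Fin n × Fin n, pick n hn x = Sym2.mk p.1 p.2 ∧ p.1 ≤ p.2 ∧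
      (x = eps n p.1 + eps n p.2 ∨ (p.1 ≠ p.2 ∧ x = eps n p.1 - eps n p.2)) := by
  have h := normal_form n hx
  exact ⟨h.choose, by rw [pick, dif_pos h], h.choose_spec⟩

/-! ### Main theorem -/

/-- In type `C_n` (`n ≥ 2`), the maximal cardinality of a set of pairwise commuting
positive roots is `n(n+1)/2`, and the unique set attaining this maximum is
`Φ^rad(n) = {ε_i + ε_j : i ≤ j}`. -/
theorem phiRad_unique_max (hn : 2 ≤ n) :
    (PhiRad n ⊆ PhiPos n ∧ (PhiRad n).Pairwise fun a b => a + b ∉ Phi n) ∧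
    (PhiRad n).ncard = n * (n + 1) / 2 ∧
    ∀ R ⊆ PhiPos n, (R.Pairwise fun a b => a + b ∉ Phi n) →
      R.ncard ≤ n * (n + 1) / 2 ∧ (R.ncard = n * (n + 1) / 2 → R = PhiRad n) := by
  have hn0 : 0 < n := by omega
  refine ⟨⟨phiRad_subset n, ?_⟩, ncard_phiRad n, ?_⟩
  · rintro a ⟨i, j, -, rfl⟩ b ⟨k, l, -, rfl⟩ -
    exact sigma_sum_not_mem n
  · intro R hR hpair
    have hinj : Set.InjOn (pick n hn0) R := by
      intro x hx y hy hpick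
      obtain ⟨⟨i, j⟩, hpx, hle, hfx⟩ := pick_spec n hn0 (hR hx)
      obtain ⟨⟨k, l⟩, hpy, hle', hfy⟩ := pick_spec n hn0 (hR hy)
      rw [hpx, hpy] at hpick
      have hkl : i = k ∧ j = l := by
        rcases Sym2.eq_iff.mp hpick with h | h
        · exact h
        · have hji : j ≤ i := by dsimp only at h; rw [h.2, h.1]; exact hle'
          have hij2 : i = j := le_antisymm hle hji
          exact ⟨hij2.trans h.2, hij2.symm.trans h.1⟩
      obtain ⟨rfl, rfl⟩ := hkl
      by_contra hne
      have hnm := hpair hx hy hne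
      rcases hfx with rfl | ⟨hij, rfl⟩ <;> rcases hfy with h2 | ⟨hij2, h2⟩
      · exact hne h2.symm
      · apply hnm
        have he : eps n i + eps n j + y = eps n i + eps n i := by rw [h2]; abel
        rw [he]; exact smul_mem_Phi n i
      · apply hnm
        have he : (eps n i - eps n j) + y = eps n i + eps n i := by rw [h2]; abel
        rw [he]; exact smul_mem_Phi n i
      · exact hne h2.symm
    have hbound : R.ncard ≤ n * (n + 1) / 2 := by
      have hle := Set.ncard_le_ncard_of_injOn (pick n hn0)
        (fun a _ => Set.mem_univ _) hinj Set.finite_univ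
      rwa [Set.ncard_univ, card_sym2] at hle
    refine ⟨hbound, fun hcard => ?_⟩
    have himg : pick n hn0 '' R = Set.univ := by
      apply Set.eq_of_subset_of_ncard_le (Set.subset_univ _)
      rw [Set.ncard_univ, card_sym2, Set.ncard_image_of_injOn hinj, hcard]
    have hsub : R ⊆ PhiRad n := by
      intro x hx
      obtain ⟨⟨i, j⟩, hpx, hle', hfx⟩ := pick_spec n hn0 (hR hx)
      rcases hfx with rfl | ⟨hij, rfl⟩
      · exact ⟨i, j, hle', rfl⟩
      · exfalso
        have hmem : s(j, j) ∈ pick n hn0 '' R := himg ▸ Set.mem_univ _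
        obtain ⟨y, hyR, hpy⟩ := hmem
        obtain ⟨⟨k, l⟩, hpy', hle'', hfy⟩ := pick_spec n hn0 (hR hyR)
        rw [hpy'] at hpy
        have hkl : k = j ∧ l = j := by rcases Sym2.eq_iff.mp hpy with h | h <;> exact h
        rcases hfy with h2 | ⟨hjj, -⟩
        · have h2' : y = eps n j + eps n j := by rw [h2, hkl.1, hkl.2]
          have hne : (eps n i - eps n j) ≠ y := by
            rw [h2']; exact fun hh => add_ne_sub n hij hh.symm
          apply hpair hx hyR hne
          have he : (eps n i - eps n j) + y = eps n i + eps n j := by rw [h2']; abel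
          rw [he]; exact add_mem_Phi n hij
        · exact hjj (hkl.1.trans hkl.2.symm)
    exact Set.eq_of_subset_of_ncard_le hsub (by rw [hcard, ncard_phiRad]) (phiRad_finite n)

end TypeC
end

section
/- In the root system of type D_n (n ≥ 4) with positive roots {ε_i ± ε_j : 1 ≤ i < j ≤ n}, if R ⊆ Φ^rad({α_1, α_2}) is an inclusion-maximal set of pairwise commuting roots containing ε_1 − ε_2, then R = Φ^rad(1) = {ε_1 ± ε_j : 2 ≤ j ≤ n}, which has 2n − 2 elements; if instead ε_1 − ε_2 ∉ R, then R consists of ε_1 + ε_2 together with exactly one root from each pair {ε_1 + ε_r, ε_2 − ε_r} and each pair {ε_1 − ε_r, ε_2 + ε_r} for 2 < r ≤ n, so |R| = 2n − 3. -/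
set_option autoImplicit false

namespace TypeD

variable (n : ℕ)

/-- The standard basis vector `ε i` of `ℝ^n` (with integer coordinates). -/
def eps (i : Fin n) : Fin n → ℤ := Pi.single i 1

/-- The root system of type `D_n`: the vectors `±ε_i ± ε_j` for `i ≠ j`. -/
def Phi : Set (Fin n → ℤ) :=
  {x | ∃ i j : Fin n, i ≠ j ∧
        (x = eps n i + eps n j ∨ x = eps n i - eps n j ∨ x = -(eps n i + eps n j))}

/-- `Φ^rad({α_1, α_2})`: the positive roots involving `ε_1` or `ε_2`
(indexed from `0`: the roots `ε_0 ± ε_j` for `j ≥ 1` and `ε_1 ± ε_j` for `j ≥ 2`). -/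
def PhiRad12 (h : 4 ≤ n) : Set (Fin n → ℤ) :=
  {x | ∃ j : Fin n,
        (1 ≤ j.val ∧ (x = eps n ⟨0, by omega⟩ + eps n j ∨ x = eps n ⟨0, by omega⟩ - eps n j)) ∨
        (2 ≤ j.val ∧ (x = eps n ⟨1, by omega⟩ + eps n j ∨ x = eps n ⟨1, by omega⟩ - eps n j))}

def dot (u v : Fin n → ℤ) : ℤ := ∑ x, u x * v x

lemma eps_apply (a x : Fin n) : eps n a x = if x.val = a.val then 1 else 0 := by
  simp [eps, Pi.single_apply, Fin.ext_iff]

lemma dot_add_left (u v w : Fin n → ℤ) : dot n (u + v) w = dot n u w + dot n v w := by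
  simp [dot, add_mul, Finset.sum_add_distrib]

lemma dot_sub_left (u v w : Fin n → ℤ) : dot n (u - v) w = dot n u w - dot n v w := by
  simp [dot, sub_mul, Finset.sum_sub_distrib]

lemma dot_add_right (u v w : Fin n → ℤ) : dot n u (v + w) = dot n u v + dot n u w := by
  simp [dot, mul_add, Finset.sum_add_distrib]

lemma dot_sub_right (u v w : Fin n → ℤ) : dot n u (v - w) = dot n u v - dot n u w := by
  simp [dot, mul_sub, Finset.sum_sub_distrib]

lemma dot_neg_left (u v : Fin n → ℤ) : dot n (-u) v = -dot n u v := by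
  simp [dot, neg_mul, Finset.sum_neg_distrib]

lemma dot_neg_right (u v : Fin n → ℤ) : dot n u (-v) = -dot n u v := by
  simp [dot, mul_neg, Finset.sum_neg_distrib]

lemma dot_comm (u v : Fin n → ℤ) : dot n u v = dot n v u := by
  simp [dot, mul_comm]

lemma dot_eps (a b : Fin n) : dot n (eps n a) (eps n b) = if a.val = b.val then 1 else 0 := by
  unfold dot
  rw [Finset.sum_eq_single a]
  · simp [eps_apply]
  · intro x _ hx
    have : x.val ≠ a.val := fun e => hx (Fin.ext e)
    simp [eps_apply, this]
  · simp

lemma mem_Phi_dot {x : Fin n → ℤ} (hx : x ∈ Phi n) : dot n x x = 2 := by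
  obtain ⟨i, j, hij, hf⟩ := hx
  have hij' : i.val ≠ j.val := fun e => hij (Fin.ext e)
  rcases hf with rfl | rfl | rfl <;>
    simp [dot_add_left, dot_sub_left, dot_neg_left, dot_add_right, dot_sub_right, dot_neg_right,
      dot_eps, hij'] <;> split_ifs <;> omega

lemma not_mem_Phi' {x : Fin n → ℤ} (hx : dot n x x ≠ 2) : x ∉ Phi n :=
  fun hm => hx (mem_Phi_dot n hm)

lemma add_not_mem_Phi {u v : Fin n → ℤ} (hu : dot n u u = 2) (hv : dot n v v = 2)
    (huv : dot n u v ≠ -1) : u + v ∉ Phi n := by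
  apply not_mem_Phi'
  rw [dot_add_left, dot_add_right, dot_add_right, hu, hv, dot_comm n v u]
  omega

lemma phiRad_cases (h : 4 ≤ n) {x : Fin n → ℤ} (hx : x ∈ PhiRad12 n h) :
    ∃ p j : Fin n, (p.val = 0 ∧ 1 ≤ j.val ∨ p.val = 1 ∧ 2 ≤ j.val) ∧
      (x = eps n p + eps n j ∨ x = eps n p - eps n j) := by
  obtain ⟨j, hj | hj⟩ := hx
  · exact ⟨⟨0, by omega⟩, j, Or.inl ⟨rfl, hj.1⟩, hj.2⟩
  · exact ⟨⟨1, by omega⟩, j, Or.inr ⟨rfl, hj.1⟩, hj.2⟩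

lemma norm_phiRad (h : 4 ≤ n) {x : Fin n → ℤ} (hx : x ∈ PhiRad12 n h) : dot n x x = 2 := by
  obtain ⟨p, j, hpj, hx⟩ := phiRad_cases n h hx
  rcases hx with rfl | rfl <;>
    simp [dot_add_left, dot_sub_left, dot_add_right, dot_sub_right, dot_eps] <;>
      split_ifs <;> omega

lemma card_filter_ge (k : ℕ) (hk : k ≤ n) :
    (Finset.univ.filter (fun j : Fin n => k ≤ j.val)).card = n - k := by
  have himg : Finset.univ.filter (fun j : Fin n => k ≤ j.val)
      = Finset.univ.image (fun i : Fin (n - k) => (⟨i.val + k, by omega⟩ : Fin n)) := by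
    ext j
    simp only [Finset.mem_filter, Finset.mem_univ, true_and, Finset.mem_image]
    constructor
    · intro hj
      have hb := j.isLt
      exact ⟨⟨j.val - k, by omega⟩, Fin.ext (by simp; omega)⟩
    · rintro ⟨i, rfl⟩; simp
  rw [himg, Finset.card_image_of_injective _ (fun a b hab => ?_), Finset.card_univ,
    Fintype.card_fin]
  have := congrArg Fin.val hab
  simp at this
  exact Fin.ext (by omega)

/-- In type `D_n` (`n ≥ 4`): if `R ⊆ Φ^rad({α_1, α_2})` is an inclusion-maximal set of
pairwise commuting roots containing `ε_1 − ε_2`, then `R = Φ^rad(1) = {ε_1 ± ε_j : j ≥ 2}`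
and `|R| = 2n − 2`; if instead `ε_1 − ε_2 ∉ R`, then `R` consists of `ε_1 + ε_2` together
with exactly one root from each pair `{ε_1 + ε_r, ε_2 − ε_r}` and each pair
`{ε_1 − ε_r, ε_2 + ε_r}` for `r > 2`, and `|R| = 2n − 3`. -/
theorem maxComm_in_phiRad12 (h : 4 ≤ n)
    (R : Set (Fin n → ℤ)) (hR : R ⊆ PhiRad12 n h)
    (hcomm : R.Pairwise fun a b => a + b ∉ Phi n)
    (hmaxl : ∀ γ ∈ PhiRad12 n h, γ ∉ R → ¬ (insert γ R).Pairwise fun a b => a + b ∉ Phi n) :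
    (eps n ⟨0, by omega⟩ - eps n ⟨1, by omega⟩ ∈ R →
      R = {x | ∃ j : Fin n, 1 ≤ j.val ∧
            (x = eps n ⟨0, by omega⟩ + eps n j ∨ x = eps n ⟨0, by omega⟩ - eps n j)} ∧
        R.ncard = 2 * n - 2) ∧
    (eps n ⟨0, by omega⟩ - eps n ⟨1, by omega⟩ ∉ R →
      (eps n ⟨0, by omega⟩ + eps n ⟨1, by omega⟩ ∈ R ∧
       (∀ r : Fin n, 2 ≤ r.val →
          Xor' (eps n ⟨0, by omega⟩ + eps n r ∈ R) (eps n ⟨1, by omega⟩ - eps n r ∈ R) ∧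
          Xor' (eps n ⟨0, by omega⟩ - eps n r ∈ R) (eps n ⟨1, by omega⟩ + eps n r ∈ R)) ∧
       R.ncard = 2 * n - 3)) := by
  classical
  set z : Fin n := ⟨0, by omega⟩ with hzdef
  set o : Fin n := ⟨1, by omega⟩ with hodef
  have hz0 : z.val = 0 := rfl
  have ho1 : o.val = 1 := rfl
  clear_value z o
  have hzo_ne : z ≠ o := fun e => by have := congrArg Fin.val e; omega
  have hsymm : Symmetric (fun a b : Fin n → ℤ => a + b ∉ Phi n) := fun a b hab hm =>
    hab (by rwa [add_comm])
  have memzp : ∀ j : Fin n, 1 ≤ j.val → eps n z + eps n j ∈ PhiRad12 n h :=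
    fun j hj => ⟨j, Or.inl ⟨hj, Or.inl (by rw [hzdef])⟩⟩
  have memzm : ∀ j : Fin n, 1 ≤ j.val → eps n z - eps n j ∈ PhiRad12 n h :=
    fun j hj => ⟨j, Or.inl ⟨hj, Or.inr (by rw [hzdef])⟩⟩
  constructor
  · -- Case 1 : εz − εo ∈ R
    intro hzo
    have hA : ∀ x ∈ R, ∃ j : Fin n, 1 ≤ j.val ∧
        (x = eps n z + eps n j ∨ x = eps n z - eps n j) := by
      intro x hx
      obtain ⟨p, j, hpj, hsh⟩ := phiRad_cases n h (hR hx)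
      rcases hpj with ⟨hp, hj⟩ | ⟨hp, hj⟩
      · have hpz : p = z := Fin.ext (by omega)
        rw [hpz] at hsh
        exact ⟨j, hj, hsh⟩
      · exfalso
        have hpo : p = o := Fin.ext (by omega)
        rw [hpo] at hsh
        have hne : eps n z - eps n o ≠ x := by
          rcases hsh with rfl | rfl <;>
          · intro e
            have hc := congrFun e z
            simp only [Pi.add_apply, Pi.sub_apply, eps_apply] at hc
            split_ifs at hc <;> omega
        have hnc := hcomm hzo hx hne
        apply hnc
        have hzj : z ≠ j := fun e => by have := congrArg Fin.val e; omega
        rcases hsh with rfl | rfl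
        · exact ⟨z, j, hzj, Or.inl (by abel)⟩
        · exact ⟨z, j, hzj, Or.inr (Or.inl (by abel))⟩
    have hB : ∀ j : Fin n, 1 ≤ j.val →
        eps n z + eps n j ∈ R ∧ eps n z - eps n j ∈ R := by
      intro j hj
      have key : ∀ y, (y = eps n z + eps n j ∨ y = eps n z - eps n j) → y ∈ R := by
        intro y hy
        have hymem : y ∈ PhiRad12 n h := by
          rcases hy with rfl | rfl
          exacts [memzp j hj, memzm j hj]
        by_contra hyR
        refine hmaxl y hymem hyR ?_
        rw [haveI : Std.Symm (fun a b : Fin n → ℤ => a + b ∉ Phi n) := ⟨fun a b => @hsymm a b⟩; Set.pairwise_insert_of_symm]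
        refine ⟨hcomm, fun b hb _ => ?_⟩
        obtain ⟨k, hk, hbs⟩ := hA b hb
        apply add_not_mem_Phi
        · exact norm_phiRad n h hymem
        · exact norm_phiRad n h (hR hb)
        · rcases hy with rfl | rfl <;> rcases hbs with rfl | rfl <;>
            (simp only [dot_add_left, dot_sub_left, dot_add_right, dot_sub_right, dot_eps];
             split_ifs <;> omega)
      exact ⟨key _ (Or.inl rfl), key _ (Or.inr rfl)⟩
    have hReq : R = {x | ∃ j : Fin n, 1 ≤ j.val ∧
        (x = eps n z + eps n j ∨ x = eps n z - eps n j)} := by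
      ext x
      simp only [Set.mem_setOf_eq]
      constructor
      · exact hA x
      · rintro ⟨j, hj, rfl | rfl⟩
        exacts [(hB j hj).1, (hB j hj).2]
    refine ⟨hReq, ?_⟩
    rw [hReq]
    set J1 : Finset (Fin n) := Finset.univ.filter (fun j : Fin n => 1 ≤ j.val) with hJ1
    have hset : {x : Fin n → ℤ | ∃ j : Fin n, 1 ≤ j.val ∧
        (x = eps n z + eps n j ∨ x = eps n z - eps n j)}
        = ↑(J1.image (fun j => eps n z + eps n j) ∪ J1.image (fun j => eps n z - eps n j)) := by
      ext x
      simp only [Set.mem_setOf_eq, Finset.coe_union, Set.mem_union, Finset.coe_image,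
        Set.mem_image, Finset.mem_coe, hJ1, Finset.mem_filter, Finset.mem_univ, true_and]
      constructor
      · rintro ⟨j, hj, rfl | rfl⟩
        · exact Or.inl ⟨j, hj, rfl⟩
        · exact Or.inr ⟨j, hj, rfl⟩
      · rintro (⟨j, hj, rfl⟩ | ⟨j, hj, rfl⟩)
        · exact ⟨j, hj, Or.inl rfl⟩
        · exact ⟨j, hj, Or.inr rfl⟩
    have hinj1 : Set.InjOn (fun j => eps n z + eps n j) ↑J1 := by
      intro a _ b _ e
      simp only at e
      refine Fin.ext ?_
      have hc := congrFun e a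
      simp only [Pi.add_apply, eps_apply] at hc
      split_ifs at hc <;> omega
    have hinj2 : Set.InjOn (fun j => eps n z - eps n j) ↑J1 := by
      intro a _ b _ e
      simp only at e
      refine Fin.ext ?_
      have hc := congrFun e a
      simp only [Pi.sub_apply, eps_apply] at hc
      split_ifs at hc <;> omega
    have hdisj : Disjoint (J1.image (fun j => eps n z + eps n j))
        (J1.image (fun j => eps n z - eps n j)) := by
      rw [Finset.disjoint_left]
      rintro x hx1 hx2
      obtain ⟨a, _, rfl⟩ := Finset.mem_image.mp hx1
      obtain ⟨b, _, e⟩ := Finset.mem_image.mp hx2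
      have hc := congrFun e a
      simp only [Pi.add_apply, Pi.sub_apply, eps_apply] at hc
      split_ifs at hc <;> omega
    rw [hset, Set.ncard_coe_finset, Finset.card_union_of_disjoint hdisj,
      Finset.card_image_of_injOn hinj1, Finset.card_image_of_injOn hinj2, hJ1,
      card_filter_ge n 1 (by omega)]
    omega
  · -- Case 2 : εz − εo ∉ R
    intro hzo
    have hbase : eps n z + eps n o ∈ R := by
      by_contra hb
      refine hmaxl _ (memzp o (by omega)) hb ?_
      rw [haveI : Std.Symm (fun a b : Fin n → ℤ => a + b ∉ Phi n) := ⟨fun a b => @hsymm a b⟩; Set.pairwise_insert_of_symm]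
      refine ⟨hcomm, fun v hv _ => ?_⟩
      obtain ⟨p, j, hpj, hsh⟩ := phiRad_cases n h (hR hv)
      apply add_not_mem_Phi
      · exact norm_phiRad n h (memzp o (by omega))
      · exact norm_phiRad n h (hR hv)
      · rcases hsh with rfl | rfl <;>
          (simp only [dot_add_left, dot_sub_left, dot_add_right, dot_sub_right, dot_eps];
           split_ifs <;> omega)
    have hxor : ∀ r : Fin n, 2 ≤ r.val →
        Xor' (eps n z + eps n r ∈ R) (eps n o - eps n r ∈ R) ∧
        Xor' (eps n z - eps n r ∈ R) (eps n o + eps n r ∈ R) := by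
      intro r hr
      have hzr : z ≠ r := fun e => by have := congrArg Fin.val e; omega
      have notboth1 : ¬(eps n z + eps n r ∈ R ∧ eps n o - eps n r ∈ R) := by
        rintro ⟨h1, h2⟩
        have hne : eps n z + eps n r ≠ eps n o - eps n r := by
          intro e
          have hc := congrFun e z
          simp only [Pi.add_apply, Pi.sub_apply, eps_apply] at hc
          split_ifs at hc <;> omega
        exact hcomm h1 h2 hne ⟨z, o, hzo_ne, Or.inl (by abel)⟩
      have notboth2 : ¬(eps n z - eps n r ∈ R ∧ eps n o + eps n r ∈ R) := by
        rintro ⟨h1, h2⟩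
        have hne : eps n z - eps n r ≠ eps n o + eps n r := by
          intro e
          have hc := congrFun e z
          simp only [Pi.add_apply, Pi.sub_apply, eps_apply] at hc
          split_ifs at hc <;> omega
        exact hcomm h1 h2 hne ⟨z, o, hzo_ne, Or.inl (by abel)⟩
      have atleast1 : eps n z + eps n r ∈ R ∨ eps n o - eps n r ∈ R := by
        by_contra hcon
        push_neg at hcon
        refine hmaxl _ (memzp r (by omega)) hcon.1 ?_
        rw [haveI : Std.Symm (fun a b : Fin n → ℤ => a + b ∉ Phi n) := ⟨fun a b => @hsymm a b⟩; Set.pairwise_insert_of_symm]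
        refine ⟨hcomm, fun v hv _ => ?_⟩
        by_cases hveq : v = eps n o - eps n r
        · exact absurd (hveq ▸ hv) hcon.2
        obtain ⟨p, j, hpj, hsh⟩ := phiRad_cases n h (hR hv)
        apply add_not_mem_Phi
        · exact norm_phiRad n h (memzp r (by omega))
        · exact norm_phiRad n h (hR hv)
        · rcases hsh with rfl | rfl
          · simp only [dot_add_left, dot_sub_left, dot_add_right, dot_sub_right, dot_eps]
            split_ifs <;> omega
          · have hside : ¬(p.val = 1 ∧ j.val = r.val) := by
              rintro ⟨hp1, hjr⟩
              exact hveq (by rw [show p = o from Fin.ext (by omega),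
                show j = r from Fin.ext hjr])
            simp only [dot_add_left, dot_sub_left, dot_add_right, dot_sub_right, dot_eps]
            split_ifs <;> omega
      have atleast2 : eps n z - eps n r ∈ R ∨ eps n o + eps n r ∈ R := by
        by_contra hcon
        push_neg at hcon
        refine hmaxl _ (memzm r (by omega)) hcon.1 ?_
        rw [haveI : Std.Symm (fun a b : Fin n → ℤ => a + b ∉ Phi n) := ⟨fun a b => @hsymm a b⟩; Set.pairwise_insert_of_symm]
        refine ⟨hcomm, fun v hv _ => ?_⟩
        by_cases hveq : v = eps n o + eps n r
        · exact absurd (hveq ▸ hv) hcon.2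
        obtain ⟨p, j, hpj, hsh⟩ := phiRad_cases n h (hR hv)
        apply add_not_mem_Phi
        · exact norm_phiRad n h (memzm r (by omega))
        · exact norm_phiRad n h (hR hv)
        · rcases hsh with rfl | rfl
          · have hside : ¬(p.val = 1 ∧ j.val = r.val) := by
              rintro ⟨hp1, hjr⟩
              exact hveq (by rw [show p = o from Fin.ext (by omega),
                show j = r from Fin.ext hjr])
            simp only [dot_add_left, dot_sub_left, dot_add_right, dot_sub_right, dot_eps]
            split_ifs <;> omega
          · simp only [dot_add_left, dot_sub_left, dot_add_right, dot_sub_right, dot_eps]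
            split_ifs <;> omega
      constructor
      · rcases atleast1 with h1 | h1
        · exact Or.inl ⟨h1, fun h2 => notboth1 ⟨h1, h2⟩⟩
        · exact Or.inr ⟨h1, fun h2 => notboth1 ⟨h2, h1⟩⟩
      · rcases atleast2 with h1 | h1
        · exact Or.inl ⟨h1, fun h2 => notboth2 ⟨h1, h2⟩⟩
        · exact Or.inr ⟨h1, fun h2 => notboth2 ⟨h2, h1⟩⟩
    refine ⟨hbase, hxor, ?_⟩
    -- cardinality in case 2
    set J2 : Finset (Fin n) := Finset.univ.filter (fun j : Fin n => 2 ≤ j.val) with hJ2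
    set cA : Fin n → (Fin n → ℤ) :=
      fun r => if eps n z + eps n r ∈ R then eps n z + eps n r else eps n o - eps n r with hcA
    set cB : Fin n → (Fin n → ℤ) :=
      fun r => if eps n z - eps n r ∈ R then eps n z - eps n r else eps n o + eps n r with hcB
    have hcAshape : ∀ r : Fin n, cA r = eps n z + eps n r ∨ cA r = eps n o - eps n r := by
      intro r
      by_cases hc : eps n z + eps n r ∈ R
      · exact Or.inl (by simp only [hcA]; rw [if_pos hc])
      · exact Or.inr (by simp only [hcA]; rw [if_neg hc])
    have hcBshape : ∀ r : Fin n, cB r = eps n z - eps n r ∨ cB r = eps n o + eps n r := by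
      intro r
      by_cases hc : eps n z - eps n r ∈ R
      · exact Or.inl (by simp only [hcB]; rw [if_pos hc])
      · exact Or.inr (by simp only [hcB]; rw [if_neg hc])
    have hcAmem : ∀ r : Fin n, 2 ≤ r.val → cA r ∈ R := by
      intro r hr
      by_cases hc : eps n z + eps n r ∈ R
      · simp only [hcA]; rw [if_pos hc]; exact hc
      · rcases (hxor r hr).1 with ⟨h1, _⟩ | ⟨h1, _⟩
        · exact absurd h1 hc
        · simp only [hcA]; rw [if_neg hc]; exact h1
    have hcBmem : ∀ r : Fin n, 2 ≤ r.val → cB r ∈ R := by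
      intro r hr
      by_cases hc : eps n z - eps n r ∈ R
      · simp only [hcB]; rw [if_pos hc]; exact hc
      · rcases (hxor r hr).2 with ⟨h1, _⟩ | ⟨h1, _⟩
        · exact absurd h1 hc
        · simp only [hcB]; rw [if_neg hc]; exact h1
    have hTeq : R = ↑(insert (eps n z + eps n o) (J2.image cA ∪ J2.image cB)) := by
      ext x
      simp only [Finset.coe_insert, Set.mem_insert_iff, Finset.coe_union, Set.mem_union,
        Finset.coe_image, Set.mem_image, Finset.mem_coe, hJ2, Finset.mem_filter,
        Finset.mem_univ, true_and]
      constructor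
      · intro hx
        obtain ⟨p, j, hpj, hsh⟩ := phiRad_cases n h (hR hx)
        rcases hpj with ⟨hp, hj⟩ | ⟨hp, hj⟩
        · have hpz : p = z := Fin.ext (by omega)
          rw [hpz] at hsh
          rcases hsh with rfl | rfl
          · by_cases hj1 : j.val = 1
            · have : j = o := Fin.ext (by omega)
              subst this
              exact Or.inl rfl
            · refine Or.inr (Or.inl ⟨j, by omega, ?_⟩)
              simp only [hcA]; rw [if_pos hx]
          · by_cases hj1 : j.val = 1
            · have : j = o := Fin.ext (by omega)
              subst this
              exact absurd hx hzo
            · refine Or.inr (Or.inr ⟨j, by omega, ?_⟩)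
              simp only [hcB]; rw [if_pos hx]
        · have hpo : p = o := Fin.ext (by omega)
          rw [hpo] at hsh
          rcases hsh with rfl | rfl
          · -- x = εo + εj : then εz − εj ∉ R, so cB j = x
            rcases (hxor j hj).2 with ⟨_, h2⟩ | ⟨h1, h2⟩
            · exact absurd hx h2
            · refine Or.inr (Or.inr ⟨j, hj, ?_⟩)
              simp only [hcB]; rw [if_neg h2]
          · rcases (hxor j hj).1 with ⟨_, h2⟩ | ⟨h1, h2⟩
            · exact absurd hx h2
            · refine Or.inr (Or.inl ⟨j, hj, ?_⟩)
              simp only [hcA]; rw [if_neg h2]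
      · rintro (rfl | ⟨j, hj, rfl⟩ | ⟨j, hj, rfl⟩)
        · exact hbase
        · exact hcAmem j hj
        · exact hcBmem j hj
    have hJ2mem : ∀ a : Fin n, a ∈ (↑J2 : Set (Fin n)) → 2 ≤ a.val := by
      intro a ha
      simp only [hJ2, Finset.coe_filter, Set.mem_setOf_eq, Finset.mem_univ, true_and] at ha
      exact ha
    have hinjA : Set.InjOn cA ↑J2 := by
      intro a ha b hb e
      have ha' := hJ2mem a ha
      have hb' := hJ2mem b hb
      rcases hcAshape a with h1 | h1 <;> rcases hcAshape b with h2 | h2 <;>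
        rw [h1, h2] at e
      · refine Fin.ext ?_
        have hc := congrFun e a
        simp only [Pi.add_apply, eps_apply] at hc
        split_ifs at hc <;> omega
      · exfalso
        have hc := congrFun e z
        simp only [Pi.add_apply, Pi.sub_apply, eps_apply] at hc
        split_ifs at hc <;> omega
      · exfalso
        have hc := congrFun e z
        simp only [Pi.add_apply, Pi.sub_apply, eps_apply] at hc
        split_ifs at hc <;> omega
      · refine Fin.ext ?_
        have hc := congrFun e a
        simp only [Pi.sub_apply, eps_apply] at hc
        split_ifs at hc <;> omega
    have hinjB : Set.InjOn cB ↑J2 := by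
      intro a ha b hb e
      have ha' := hJ2mem a ha
      have hb' := hJ2mem b hb
      rcases hcBshape a with h1 | h1 <;> rcases hcBshape b with h2 | h2 <;>
        rw [h1, h2] at e
      · refine Fin.ext ?_
        have hc := congrFun e a
        simp only [Pi.sub_apply, eps_apply] at hc
        split_ifs at hc <;> omega
      · exfalso
        have hc := congrFun e z
        simp only [Pi.add_apply, Pi.sub_apply, eps_apply] at hc
        split_ifs at hc <;> omega
      · exfalso
        have hc := congrFun e z
        simp only [Pi.add_apply, Pi.sub_apply, eps_apply] at hc
        split_ifs at hc <;> omega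
      · refine Fin.ext ?_
        have hc := congrFun e a
        simp only [Pi.add_apply, eps_apply] at hc
        split_ifs at hc <;> omega
    have hdisjAB : Disjoint (J2.image cA) (J2.image cB) := by
      rw [Finset.disjoint_left]
      rintro x hx1 hx2
      obtain ⟨a, haJ, rfl⟩ := Finset.mem_image.mp hx1
      obtain ⟨b, hbJ, e⟩ := Finset.mem_image.mp hx2
      have ha' : 2 ≤ a.val := by
        simp only [hJ2, Finset.mem_filter, Finset.mem_univ, true_and] at haJ; exact haJ
      have hb' : 2 ≤ b.val := by
        simp only [hJ2, Finset.mem_filter, Finset.mem_univ, true_and] at hbJ; exact hbJ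
      rcases hcAshape a with h1 | h1 <;> rcases hcBshape b with h2 | h2 <;>
        rw [h1, h2] at e
      · have hc := congrFun e a
        simp only [Pi.add_apply, Pi.sub_apply, eps_apply] at hc
        split_ifs at hc <;> omega
      · have hc := congrFun e z
        simp only [Pi.add_apply, Pi.sub_apply, eps_apply] at hc
        split_ifs at hc <;> omega
      · have hc := congrFun e z
        simp only [Pi.add_apply, Pi.sub_apply, eps_apply] at hc
        split_ifs at hc <;> omega
      · have hc := congrFun e a
        simp only [Pi.add_apply, Pi.sub_apply, eps_apply] at hc
        split_ifs at hc <;> omega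
    have hbasenot : eps n z + eps n o ∉ J2.image cA ∪ J2.image cB := by
      intro hmem
      rcases Finset.mem_union.mp hmem with hm | hm
      · obtain ⟨a, haJ, e⟩ := Finset.mem_image.mp hm
        have ha' : 2 ≤ a.val := by
          simp only [hJ2, Finset.mem_filter, Finset.mem_univ, true_and] at haJ; exact haJ
        rcases hcAshape a with h1 | h1 <;> rw [h1] at e
        · have hc := congrFun e a
          simp only [Pi.add_apply, eps_apply] at hc
          split_ifs at hc <;> omega
        · have hc := congrFun e z
          simp only [Pi.add_apply, Pi.sub_apply, eps_apply] at hc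
          split_ifs at hc <;> omega
      · obtain ⟨a, haJ, e⟩ := Finset.mem_image.mp hm
        have ha' : 2 ≤ a.val := by
          simp only [hJ2, Finset.mem_filter, Finset.mem_univ, true_and] at haJ; exact haJ
        rcases hcBshape a with h1 | h1 <;> rw [h1] at e
        · have hc := congrFun e a
          simp only [Pi.add_apply, Pi.sub_apply, eps_apply] at hc
          split_ifs at hc <;> omega
        · have hc := congrFun e z
          simp only [Pi.add_apply, eps_apply] at hc
          split_ifs at hc <;> omega
    rw [hTeq, Set.ncard_coe_finset, Finset.card_insert_of_notMem hbasenot,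
      Finset.card_union_of_disjoint hdisjAB, Finset.card_image_of_injOn hinjA,
      Finset.card_image_of_injOn hinjB, hJ2, card_filter_ge n 2 (by omega)]
    omega

end TypeD
end

section
/- In the root system of type F_4, among the 8 positive roots of the form ε_{ijk} = ½(ε_1 + iε_2 + jε_3 + kε_4) with i, j, k ∈ {±1}, two distinct such roots commute (their sum is not a root) if and only if the sign vectors (i,j,k) and (i′,j′,k′) differ in exactly one coordinate. Consequently, any set of pairwise commuting roots of F_4 contains at most 2 roots of this form. -/
set_option autoImplicit false

namespace TypeF4

/-- The standard basis vector `ε i` of `ℝ^4` (with rational coordinates). -/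
def eps (i : Fin 4) : Fin 4 → ℚ := Pi.single i 1

/-- A sign vector: every coordinate is `1` or `-1`. -/
def IsSign (s : Fin 4 → ℚ) : Prop := ∀ t, s t = 1 ∨ s t = -1

/-- The root system of type `F_4`: `±ε_i`, `±ε_i ± ε_j` (`i ≠ j`), and
`½(±ε_1 ± ε_2 ± ε_3 ± ε_4)`. -/
def Phi : Set (Fin 4 → ℚ) :=
  {x | (∃ i, x = eps i ∨ x = -eps i) ∨
       (∃ i j, i ≠ j ∧ (x = eps i + eps j ∨ x = eps i - eps j ∨ x = -(eps i + eps j))) ∨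
       (∃ s, IsSign s ∧ x = (1 / 2 : ℚ) • s)}

/-- The positive half-roots `ε_{ijk} = ½(ε_1 + iε_2 + jε_3 + kε_4)`. -/
def IsHalfRoot (x : Fin 4 → ℚ) : Prop :=
  ∃ s, IsSign s ∧ s 0 = 1 ∧ x = (1 / 2 : ℚ) • s

/-! ### Integer (doubled) model -/

/-- Doubled standard basis vector, over `ℤ`. -/
def eZ (i : Fin 4) : Fin 4 → ℤ := fun t => if t = i then 2 else 0

/-- Sign as an integer. -/
def sgnZ (b : Bool) : ℤ := if b then 1 else -1

/-- Integer sign vector from a boolean vector. -/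
def svZ (b : Fin 4 → Bool) : Fin 4 → ℤ := fun t => sgnZ (b t)

/-- Sign as a rational. -/
def sgn (b : Bool) : ℚ := if b then 1 else -1

/-- Rational sign vector from a boolean vector. -/
def sv (b : Fin 4 → Bool) : Fin 4 → ℚ := fun t => sgn (b t)

/-- Cast an integer vector to a rational vector. -/
def castz (z : Fin 4 → ℤ) : Fin 4 → ℚ := fun t => (z t : ℚ)

/-- Membership in `Phi` for `½ • castz z`, phrased decidably over `ℤ`. -/
def InPhiZ (z : Fin 4 → ℤ) : Prop :=
  (∃ i, z = eZ i ∨ z = -eZ i) ∨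
  (∃ i j, i ≠ j ∧ (z = eZ i + eZ j ∨ z = eZ i - eZ j ∨ z = -(eZ i + eZ j))) ∨
  (∀ t, z t = 1 ∨ z t = -1)

instance : DecidablePred InPhiZ := fun z => by unfold InPhiZ; infer_instance

lemma castz_add (z w : Fin 4 → ℤ) : castz (z + w) = castz z + castz w := by
  funext t; simp [castz]

lemma castz_sub (z w : Fin 4 → ℤ) : castz (z - w) = castz z - castz w := by
  funext t; simp [castz]

lemma castz_neg (z : Fin 4 → ℤ) : castz (-z) = -castz z := by
  funext t; simp [castz]

lemma half_eq_iff (z w : Fin 4 → ℤ) :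
    (1 / 2 : ℚ) • castz z = (1 / 2 : ℚ) • castz w ↔ z = w := by
  constructor
  · intro h
    funext t
    have h' := congrFun h t
    simp only [Pi.smul_apply, castz, smul_eq_mul] at h'
    have : (z t : ℚ) = (w t : ℚ) := by linarith
    exact_mod_cast this
  · rintro rfl; rfl

lemma eps_eq (i : Fin 4) : eps i = (1 / 2 : ℚ) • castz (eZ i) := by
  funext t
  simp only [eps, Pi.single_apply, Pi.smul_apply, castz, eZ, smul_eq_mul]
  split <;> norm_num

lemma mem_Phi_half (z : Fin 4 → ℤ) : (1 / 2 : ℚ) • castz z ∈ Phi ↔ InPhiZ z := by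
  unfold Phi InPhiZ
  simp only [Set.mem_setOf_eq]
  refine or_congr ?_ (or_congr ?_ ?_)
  · refine exists_congr fun i => or_congr ?_ ?_
    · rw [eps_eq, half_eq_iff]
    · rw [eps_eq, ← smul_neg, ← castz_neg, half_eq_iff]
  · refine exists_congr fun i => exists_congr fun j => and_congr_right fun _ =>
      or_congr ?_ (or_congr ?_ ?_)
    · rw [eps_eq, eps_eq, ← smul_add, ← castz_add, half_eq_iff]
    · rw [eps_eq, eps_eq, ← smul_sub, ← castz_sub, half_eq_iff]
    · rw [eps_eq, eps_eq, ← smul_add, ← castz_add]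
      rw [← smul_neg, ← castz_neg, half_eq_iff]
  · constructor
    · rintro ⟨s, hs, heq⟩ t
      have hcz : castz z = s :=
        smul_right_injective (Fin 4 → ℚ) (by norm_num : (1 / 2 : ℚ) ≠ 0) heq
      rcases hs t with h | h <;> [left; right] <;>
        · have := congrFun hcz t
          simp only [castz] at this
          rw [h] at this
          exact_mod_cast this
    · intro h
      refine ⟨castz z, fun t => ?_, rfl⟩
      rcases h t with h' | h' <;> [left; right] <;> simp [castz, h']

lemma keyZ1 : ∀ b b' : Fin 4 → Bool, b 0 = true → b' 0 = true → b ≠ b' →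
    (¬ InPhiZ (svZ b + svZ b') ↔ (Finset.univ.filter fun t => b t ≠ b' t).card = 1) := by
  decide

lemma keyZ2 : ∀ b₁ b₂ b₃ : Fin 4 → Bool, b₁ 0 = true → b₂ 0 = true → b₃ 0 = true →
    b₁ ≠ b₂ → b₁ ≠ b₃ → b₂ ≠ b₃ →
    ¬ InPhiZ (svZ b₁ + svZ b₂) → ¬ InPhiZ (svZ b₁ + svZ b₃) → ¬ InPhiZ (svZ b₂ + svZ b₃) →
    False := by
  decide

lemma isSign_iff (s : Fin 4 → ℚ) : IsSign s ↔ ∃ b, s = sv b := by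
  constructor
  · intro hs
    refine ⟨fun t => decide (s t = 1), funext fun t => ?_⟩
    rcases hs t with h | h <;> norm_num [sv, sgn, h]
  · rintro ⟨b, rfl⟩ t
    unfold sv sgn; cases b t <;> simp

lemma sv_zero_true {b : Fin 4 → Bool} (h : sv b 0 = 1) : b 0 = true := by
  unfold sv sgn at h
  cases hb : b 0 <;> simp [hb] at h ⊢
  norm_num at h

lemma sum_sv_eq (b b' : Fin 4 → Bool) :
    (1 / 2 : ℚ) • sv b + (1 / 2 : ℚ) • sv b' = (1 / 2 : ℚ) • castz (svZ b + svZ b') := by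
  funext t
  simp only [Pi.add_apply, Pi.smul_apply, castz, svZ, sv, sgnZ, sgn, smul_eq_mul]
  cases b t <;> cases b' t <;> norm_num

/-- In `F_4`, two distinct positive half-roots `ε_{ijk}`, `ε_{i'j'k'}` commute if and only
if their sign vectors differ in exactly one coordinate; consequently any set of pairwise
commuting roots contains at most two roots of this form. -/
theorem halfRoots_commute_iff_one_sign_change :
    (∀ s s' : Fin 4 → ℚ, IsSign s → IsSign s' → s 0 = 1 → s' 0 = 1 → s ≠ s' →
      (((1 / 2 : ℚ) • s + (1 / 2 : ℚ) • s' ∉ Phi) ↔ {t : Fin 4 | s t ≠ s' t}.ncard = 1)) ∧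
    ∀ R ⊆ Phi, (R.Pairwise fun a b => a + b ∉ Phi) →
      {x ∈ R | IsHalfRoot x}.ncard ≤ 2 := by
  constructor
  · intro s s' hs hs' h0 h0' hne
    obtain ⟨b, rfl⟩ := (isSign_iff s).1 hs
    obtain ⟨b', rfl⟩ := (isSign_iff s').1 hs'
    have hb0 := sv_zero_true h0
    have hb0' := sv_zero_true h0'
    have hbne : b ≠ b' := fun h => hne (by rw [h])
    have hset : {t : Fin 4 | sv b t ≠ sv b' t} =
        ↑(Finset.univ.filter fun t => b t ≠ b' t) := by
      ext t
      simp only [Set.mem_setOf_eq, Finset.coe_filter, Finset.mem_univ, true_and]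
      unfold sv sgn
      cases b t <;> cases b' t <;> simp <;> norm_num
    rw [sum_sv_eq, hset, Set.ncard_coe_finset]
    rw [show ((1 / 2 : ℚ) • castz (svZ b + svZ b') ∉ Phi) ↔
        ¬ InPhiZ (svZ b + svZ b') from not_congr (mem_Phi_half _)]
    exact keyZ1 b b' hb0 hb0' hbne
  · intro R _hR hpair
    by_cases hfin : {x ∈ R | IsHalfRoot x}.Finite
    · by_contra h
      push_neg at h
      obtain ⟨x, hx, y, hy, z, hz, hxy, hxz, hyz⟩ := (Set.two_lt_ncard hfin).1 h
      obtain ⟨hxR, sx, hsx, hsx0, rfl⟩ := hx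
      obtain ⟨hyR, sy, hsy, hsy0, rfl⟩ := hy
      obtain ⟨hzR, sz, hsz, hsz0, rfl⟩ := hz
      obtain ⟨b₁, rfl⟩ := (isSign_iff sx).1 hsx
      obtain ⟨b₂, rfl⟩ := (isSign_iff sy).1 hsy
      obtain ⟨b₃, rfl⟩ := (isSign_iff sz).1 hsz
      refine keyZ2 b₁ b₂ b₃ (sv_zero_true hsx0) (sv_zero_true hsy0) (sv_zero_true hsz0)
        (fun h => hxy (by rw [h])) (fun h => hxz (by rw [h])) (fun h => hyz (by rw [h]))
        ?_ ?_ ?_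
      · rw [← mem_Phi_half, ← sum_sv_eq]; exact hpair hxR hyR hxy
      · rw [← mem_Phi_half, ← sum_sv_eq]; exact hpair hxR hzR hxz
      · rw [← mem_Phi_half, ← sum_sv_eq]; exact hpair hyR hzR hyz
    · rw [Set.Infinite.ncard hfin]; omega

end TypeF4
end

section
/- Let k be an algebraically closed field of characteristic 2 and let g = pgl_2(k) = gl_2(k)/(scalars) with its restricted Lie algebra structure. Then the set of 2-nilpotent elements of g (i.e., elements x with x^[2] = 0) is a 2-dimensional linear subspace of g, namely the image of the span of the matrices E_{12}, E_{21}, and the identity. -/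
set_option autoImplicit false
set_option maxHeartbeats 1000000

open Module Matrix

namespace PGL2

variable (k : Type*) [Field k]

/-- The scalar matrices, i.e. the line spanned by the identity in `gl₂`. -/
def scalars : Submodule k (Matrix (Fin 2) (Fin 2) k) :=
  Submodule.span k {(1 : Matrix (Fin 2) (Fin 2) k)}

variable {k}

lemma mem_scalars_iff (x : Matrix (Fin 2) (Fin 2) k) :
    x ∈ scalars k ↔ ∃ c : k, x = c • 1 := by
  simp [scalars, Submodule.mem_span_singleton, eq_comm]

lemma sq_inj [CharP k 2] {a b : k} (h : a * a = b * b) : a = b := by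
  have h2 : (2 : k) = 0 := by exact_mod_cast CharP.cast_eq_zero k 2
  have hz : (a - b) * (a - b) = 0 := by linear_combination h + (b * b - a * b) * h2
  exact sub_eq_zero.mp (mul_self_eq_zero.mp hz)

/-- The diagonal-equal submodule. -/
def T : Submodule k (Matrix (Fin 2) (Fin 2) k) where
  carrier := {x | x 0 0 = x 1 1}
  add_mem' := by intro a b ha hb; simp_all [Matrix.add_apply]
  zero_mem' := rfl
  smul_mem' := by intro c x hx; simp_all [Matrix.smul_apply]

lemma mem_span_iff (x : Matrix (Fin 2) (Fin 2) k) :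
    x ∈ Submodule.span k {Matrix.single 0 1 (1 : k),
      Matrix.single 1 0 (1 : k), (1 : Matrix (Fin 2) (Fin 2) k)} ↔
    x 0 0 = x 1 1 := by
  constructor
  · intro hx
    have hle : Submodule.span k {Matrix.single 0 1 (1 : k),
        Matrix.single 1 0 (1 : k), (1 : Matrix (Fin 2) (Fin 2) k)} ≤ T := by
      rw [Submodule.span_le]
      rintro y (rfl | rfl | rfl) <;>
        (show _ ∈ {x : Matrix (Fin 2) (Fin 2) k | x 0 0 = x 1 1}
         simp [T, Matrix.single, Matrix.one_apply])
    exact hle hx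
  · intro hx
    have hrep : x = x 0 1 • Matrix.single 0 1 (1 : k) +
        x 1 0 • Matrix.single 1 0 (1 : k) + x 0 0 • (1 : Matrix (Fin 2) (Fin 2) k) := by
      ext i j
      fin_cases i <;> fin_cases j <;>
        simp [Matrix.single, Matrix.one_apply, hx]
    rw [hrep]
    refine Submodule.add_mem _ (Submodule.add_mem _ ?_ ?_) ?_ <;>
      exact Submodule.smul_mem _ _ (Submodule.subset_span (by simp))

lemma sq_mem_iff [CharP k 2] (x : Matrix (Fin 2) (Fin 2) k) :
    x * x ∈ scalars k ↔ x 0 0 = x 1 1 := by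
  have h2 : (2 : k) = 0 := by exact_mod_cast CharP.cast_eq_zero k 2
  obtain ⟨a, b, c, d, rfl⟩ : ∃ a b c d, x = !![a, b; c, d] :=
    ⟨_, _, _, _, Matrix.eta_fin_two x⟩
  constructor
  · rw [mem_scalars_iff]
    rintro ⟨e, he⟩
    have h00 := congrFun (congrFun he 0) 0
    have h11 := congrFun (congrFun he 1) 1
    simp [Matrix.mul_apply, Fin.sum_univ_two, Matrix.one_apply] at h00 h11 ⊢
    exact sq_inj (by linear_combination h00 - h11)
  · intro hx
    simp at hx ⊢
    subst hx
    rw [mem_scalars_iff]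
    refine ⟨a * a + b * c, ?_⟩
    rw [← Matrix.ext_iff]
    simp only [Fin.forall_fin_two]
    refine ⟨⟨?_, ?_⟩, ?_, ?_⟩ <;>
      simp [Matrix.mul_apply, Fin.sum_univ_two, Matrix.one_apply] <;>
      (first | ring1 | (linear_combination (a * b) * h2) | (linear_combination (a * c) * h2))

variable (k)

/-- `pgl₂ = gl₂ / (scalars)`.  An element of `pgl₂` is `2`-nilpotent (`x^[2] = 0`) iff a
matrix representative squares to a scalar matrix. -/
theorem pgl2_char2_nilpotent_variety [IsAlgClosed k] [CharP k 2] :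
    (↑((Submodule.span k {Matrix.single 0 1 (1 : k),
          Matrix.single 1 0 (1 : k), (1 : Matrix (Fin 2) (Fin 2) k)}).map
        (scalars k).mkQ) :
        Set (Matrix (Fin 2) (Fin 2) k ⧸ scalars k)) =
      (scalars k).mkQ '' {x : Matrix (Fin 2) (Fin 2) k | x * x ∈ scalars k} ∧
    Module.finrank k
      ((Submodule.span k {Matrix.single 0 1 (1 : k),
          Matrix.single 1 0 (1 : k), (1 : Matrix (Fin 2) (Fin 2) k)}).map
        (scalars k).mkQ) = 2 := by
  set S := Submodule.span k {Matrix.single 0 1 (1 : k),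
    Matrix.single 1 0 (1 : k), (1 : Matrix (Fin 2) (Fin 2) k)} with hS
  have hsets : (S : Set (Matrix (Fin 2) (Fin 2) k)) = {x | x * x ∈ scalars k} := by
    ext x; rw [Set.mem_setOf_eq, sq_mem_iff, SetLike.mem_coe, mem_span_iff]
  constructor
  · rw [Submodule.map_coe, hsets]
  · have h1 : (scalars k).mkQ 1 = 0 :=
      (Submodule.Quotient.mk_eq_zero _).2 (Submodule.mem_span_singleton_self _)
    have hmap : S.map (scalars k).mkQ =
        Submodule.span k {(scalars k).mkQ (Matrix.single 0 1 (1 : k)),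
          (scalars k).mkQ (Matrix.single 1 0 (1 : k))} := by
      rw [hS, Submodule.map_span, Set.image_insert_eq, Set.image_insert_eq,
        Set.image_singleton, h1]
      refine le_antisymm (Submodule.span_le.mpr ?_)
        (Submodule.span_mono (by intro y hy; simp at hy ⊢; tauto))
      rintro y (rfl | rfl | rfl)
      · exact Submodule.subset_span (by simp)
      · exact Submodule.subset_span (by simp)
      · exact Submodule.zero_mem _
    rw [hmap]
    have hli : LinearIndependent k ![(scalars k).mkQ (Matrix.single 0 1 (1 : k)),
        (scalars k).mkQ (Matrix.single 1 0 (1 : k))] := by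
      rw [LinearIndependent.pair_iff]
      intro s t hst
      rw [← _root_.map_smul, ← _root_.map_smul, ← _root_.map_add] at hst
      have := (Submodule.Quotient.mk_eq_zero _).mp hst
      rw [mem_scalars_iff] at this
      obtain ⟨c, hc⟩ := this
      have h01 := congrFun (congrFun hc 0) 1
      have h10 := congrFun (congrFun hc 1) 0
      simp [Matrix.single, Matrix.one_apply] at h01 h10
      exact ⟨h01, h10⟩
    have := finrank_span_eq_card hli
    have hr : Set.range ![(scalars k).mkQ (Matrix.single 0 1 (1 : k)),
        (scalars k).mkQ (Matrix.single 1 0 (1 : k))] =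
      {(scalars k).mkQ (Matrix.single 0 1 (1 : k)),
        (scalars k).mkQ (Matrix.single 1 0 (1 : k))} := by
      ext y
      simp only [Set.mem_range, Fin.exists_fin_two, Matrix.cons_val_zero, Matrix.cons_val_one,
        Matrix.head_cons, Set.mem_insert_iff, Set.mem_singleton_iff]
      constructor
      · rintro (rfl | rfl) <;> tauto
      · rintro (rfl | rfl) <;> tauto
    rw [hr, Fintype.card_fin] at this
    exact this

end PGL2
end

section
/- In the root system of type B_n with n ≥ 5, the sets S_t = {ε_t} ∪ {ε_i + ε_j : 1 ≤ i < j ≤ n} for 1 ≤ t ≤ n and S*_t = {ε_t} ∪ {ε_i + ε_j : 1 ≤ i < j < n} ∪ {ε_i − ε_n : 1 ≤ i < n} for 1 ≤ t < n are sets of pairwise commuting positive roots of cardinality n(n−1)/2 + 1. -/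
set_option autoImplicit false

namespace TypeB

variable (n : ℕ)

/-- The standard basis vector `ε i` of `ℝ^n` (with integer coordinates). -/
def eps (i : Fin n) : Fin n → ℤ := Pi.single i 1

/-- The root system of type `B_n`: `±ε_i` and `±ε_i ± ε_j` for `i ≠ j`. -/
def Phi : Set (Fin n → ℤ) :=
  {x | (∃ i : Fin n, x = eps n i ∨ x = -eps n i) ∨
       (∃ i j : Fin n, i ≠ j ∧
          (x = eps n i + eps n j ∨ x = eps n i - eps n j ∨ x = -(eps n i + eps n j)))}

/-- The positive roots: `ε_i`, and `ε_i ± ε_j` for `i < j`. -/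
def PhiPos : Set (Fin n → ℤ) :=
  {x | (∃ i : Fin n, x = eps n i) ∨
       (∃ i j : Fin n, i < j ∧ (x = eps n i + eps n j ∨ x = eps n i - eps n j))}

/-- `S_t = {ε_t} ∪ {ε_i + ε_j : i < j}`. -/
def S (t : Fin n) : Set (Fin n → ℤ) :=
  insert (eps n t) {x | ∃ i j : Fin n, i < j ∧ x = eps n i + eps n j}

/-- `S*_t = {ε_t} ∪ {ε_i + ε_j : i < j < n} ∪ {ε_i − ε_n : i < n}` (`ε_n` is the last
coordinate vector; indexed from `0` the conditions read `j.val < n - 1`, `i.val < n - 1`). -/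
def Sstar (hn : 5 ≤ n) (t : Fin n) : Set (Fin n → ℤ) :=
  insert (eps n t)
    ({x | ∃ i j : Fin n, i < j ∧ j.val < n - 1 ∧ x = eps n i + eps n j} ∪
     {x | ∃ i : Fin n, i.val < n - 1 ∧ x = eps n i - eps n ⟨n - 1, by omega⟩})

lemma eps_apply (i k : Fin n) : eps n i k = if k = i then 1 else 0 := by
  simp [eps, Pi.single_apply]

lemma sum_eps (i : Fin n) : ∑ k, eps n i k = 1 := by
  simp [eps, Finset.sum_pi_single]

variable {n}

lemma phi_sum_le {x : Fin n → ℤ} (hx : x ∈ Phi n) : ∑ k, x k ≤ 2 := by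
  rcases hx with ⟨i, rfl | rfl⟩ | ⟨i, j, hij, rfl | rfl | rfl⟩ <;>
    simp [Finset.sum_add_distrib, Finset.sum_sub_distrib, sum_eps]

lemma phi_coord {x : Fin n → ℤ} (hx : x ∈ Phi n) (k : Fin n) : -1 ≤ x k ∧ x k ≤ 1 := by
  rcases hx with ⟨i, rfl | rfl⟩ | ⟨i, j, hij, rfl | rfl | rfl⟩ <;>
    simp only [eps_apply, Pi.add_apply, Pi.sub_apply, Pi.neg_apply] <;>
    split_ifs <;> simp_all

lemma phi_supp {x : Fin n → ℤ} (hx : x ∈ Phi n) {a b c : Fin n}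
    (hab : a ≠ b) (hac : a ≠ c) (hbc : b ≠ c) : x a = 0 ∨ x b = 0 ∨ x c = 0 := by
  rcases hx with ⟨i, rfl | rfl⟩ | ⟨i, j, hij, rfl | rfl | rfl⟩ <;>
    simp only [eps_apply, Pi.add_apply, Pi.sub_apply, Pi.neg_apply] <;>
    split_ifs <;> simp_all

lemma eps_pair_inj {i j k l : Fin n} (hij : i < j) (hkl : k < l)
    (h : eps n i + eps n j = eps n k + eps n l) : i = k ∧ j = l := by
  have hik : i = k := by
    by_contra hne
    have hjk : j = k := by
      by_contra hjk
      have h3 := congrFun h k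
      simp [eps_apply, Pi.add_apply, (show k ≠ i from fun h' => hne h'.symm),
        (show k ≠ j from fun h' => hjk h'.symm), hkl.ne] at h3
    have hil : i = l := by
      by_contra hil
      have h1 := congrFun h i
      simp [eps_apply, Pi.add_apply, hij.ne, hne, hil] at h1
    subst hjk; subst hil
    exact absurd (hij.trans hkl) (lt_irrefl _)
  subst hik
  refine ⟨rfl, ?_⟩
  by_contra hjl
  have h2 := congrFun h j
  simp [eps_apply, Pi.add_apply, hij.ne', hjl] at h2

theorem pairsCard (m k : ℕ) (hk : k ≤ m) :
    ((Finset.univ : Finset (Fin m × Fin m)).filter (fun p => p.1 < p.2 ∧ p.2.val < k)).card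
      = k * (k-1) / 2 := by
  rw [Finset.card_filter, Fintype.sum_prod_type_right]
  have h1 : ∀ j : Fin m, (∑ i : Fin m, if i < j ∧ j.val < k then 1 else 0) =
      if j.val < k then (j : ℕ) else 0 := by
    intro j
    by_cases hj : j.val < k
    · simp only [hj, and_true, if_pos]
      rw [← Finset.card_filter]
      have : (Finset.univ.filter (fun i : Fin m => i < j)) = Finset.Iio j := by
        ext i; simp [Finset.mem_Iio]
      rw [this, Fin.card_Iio]
    · simp [hj]
  rw [Finset.sum_congr rfl (fun j _ => h1 j),
    Fin.sum_univ_eq_sum_range (fun x => if x < k then x else 0) m,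
    ← Finset.sum_filter]
  have h2 : (Finset.range m).filter (fun x => x < k) = Finset.range k := by
    ext x; simp [Finset.mem_range]; omega
  rw [h2, Finset.sum_range_id]

lemma sum_add' (a b : Fin n → ℤ) : ∑ k, (a + b) k = (∑ k, a k) + ∑ k, b k :=
  Finset.sum_add_distrib

/-- In type `B_n` (`n ≥ 5`), the sets `S_t` (`1 ≤ t ≤ n`) and `S*_t` (`1 ≤ t < n`) are
sets of pairwise commuting positive roots of cardinality `n(n−1)/2 + 1`. -/
theorem S_and_Sstar_commuting (hn : 5 ≤ n) :
    ∀ t : Fin n,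
      (S n t ⊆ PhiPos n ∧ (S n t).Pairwise (fun a b => a + b ∉ Phi n) ∧
        (S n t).ncard = n * (n - 1) / 2 + 1) ∧
      (t.val < n - 1 →
        Sstar n hn t ⊆ PhiPos n ∧ (Sstar n hn t).Pairwise (fun a b => a + b ∉ Phi n) ∧
          (Sstar n hn t).ncard = n * (n - 1) / 2 + 1) := by
  intro t
  set m : Fin n := ⟨n - 1, by omega⟩ with hm
  have hmem_S : ∀ x, x ∈ S n t ↔ x = eps n t ∨ ∃ i j : Fin n, i < j ∧ x = eps n i + eps n j := by
    intro x; simp [S, Set.mem_insert_iff]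
  have hmem_Sstar : ∀ x, x ∈ Sstar n hn t ↔ x = eps n t ∨
      (∃ i j : Fin n, i < j ∧ j.val < n - 1 ∧ x = eps n i + eps n j) ∨
      (∃ i : Fin n, i.val < n - 1 ∧ x = eps n i - eps n m) := by
    intro x; simp [Sstar, Set.mem_insert_iff, Set.mem_union, hm]
  have spair : ∀ i j : Fin n, ∑ k, (eps n i + eps n j) k = 2 := by
    intro i j; rw [sum_add', sum_eps, sum_eps]; norm_num
  refine ⟨⟨?_, ?_, ?_⟩, fun ht => ⟨?_, ?_, ?_⟩⟩
  · -- S ⊆ PhiPos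
    intro x hx
    rcases (hmem_S x).1 hx with rfl | ⟨i, j, hij, rfl⟩
    · exact Or.inl ⟨t, rfl⟩
    · exact Or.inr ⟨i, j, hij, Or.inl rfl⟩
  · -- S pairwise
    intro a ha b hb hab hmem
    have hsum := phi_sum_le hmem
    rw [sum_add'] at hsum
    rcases (hmem_S a).1 ha with rfl | ⟨i, j, hij, rfl⟩ <;>
      rcases (hmem_S b).1 hb with rfl | ⟨k, l, hkl, rfl⟩
    · exact hab rfl
    · rw [sum_eps, spair] at hsum; omega
    · rw [spair, sum_eps] at hsum; omega
    · rw [spair, spair] at hsum; omega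
  · -- S ncard
    have hSeq : S n t = ↑(insert (eps n t)
        (((Finset.univ : Finset (Fin n × Fin n)).filter
            (fun p => p.1 < p.2 ∧ p.2.val < n)).image
          (fun p => eps n p.1 + eps n p.2))) := by
      ext x
      rw [hmem_S]
      simp only [Finset.coe_insert, Set.mem_insert_iff, Finset.coe_image, Set.mem_image,
        Finset.mem_coe, Finset.mem_filter, Finset.mem_univ, true_and]
      constructor
      · rintro (rfl | ⟨i, j, hij, rfl⟩)
        · exact Or.inl rfl
        · exact Or.inr ⟨(i, j), ⟨hij, j.isLt⟩, rfl⟩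
      · rintro (rfl | ⟨⟨i, j⟩, ⟨hij, -⟩, rfl⟩)
        · exact Or.inl rfl
        · exact Or.inr ⟨i, j, hij, rfl⟩
    rw [hSeq, Set.ncard_coe_finset]
    have hnotmem : eps n t ∉ ((Finset.univ : Finset (Fin n × Fin n)).filter
        (fun p => p.1 < p.2 ∧ p.2.val < n)).image (fun p => eps n p.1 + eps n p.2) := by
      intro hmem
      rcases Finset.mem_image.1 hmem with ⟨p, -, hp⟩
      have := spair p.1 p.2
      rw [hp, sum_eps] at this
      omega
    have hinj : Set.InjOn (fun p : Fin n × Fin n => eps n p.1 + eps n p.2)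
        (((Finset.univ : Finset (Fin n × Fin n)).filter
          (fun p => p.1 < p.2 ∧ p.2.val < n)) : Set (Fin n × Fin n)) := by
      intro p hp q hq heq
      simp only [Finset.coe_filter, Set.mem_setOf_eq] at hp hq
      obtain ⟨h1, h2⟩ := eps_pair_inj hp.2.1 hq.2.1 heq
      exact Prod.ext h1 h2
    rw [Finset.card_insert_of_notMem hnotmem, Finset.card_image_of_injOn hinj,
      pairsCard n n le_rfl]
  · -- Sstar ⊆ PhiPos
    intro x hx
    rcases (hmem_Sstar x).1 hx with rfl | ⟨i, j, hij, hj, rfl⟩ | ⟨i, hi, rfl⟩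
    · exact Or.inl ⟨t, rfl⟩
    · exact Or.inr ⟨i, j, hij, Or.inl rfl⟩
    · exact Or.inr ⟨i, m, by simp [Fin.lt_def, hm]; omega, Or.inr rfl⟩
  · -- Sstar pairwise
    intro a ha b hb hab hmem
    rcases (hmem_Sstar a).1 ha with rfl | ⟨i, j, hij, hj, rfl⟩ | ⟨i, hi, rfl⟩ <;>
      rcases (hmem_Sstar b).1 hb with rfl | ⟨k, l, hkl, hl, rfl⟩ | ⟨k, hk, rfl⟩
    · exact hab rfl
    · -- eps t + pair
      have hsum := phi_sum_le hmem
      rw [sum_add', sum_eps, spair] at hsum; omega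
    · -- eps t + minus
      have htm : t ≠ m := by
        intro h; rw [h] at ht; simp [hm] at ht
      have hkm : k ≠ m := by
        intro h; rw [h] at hk; simp [hm] at hk
      by_cases htk : t = k
      · subst htk
        have := (phi_coord hmem t).2
        simp [eps_apply, Pi.add_apply, Pi.sub_apply, htm] at this
      · rcases phi_supp hmem htk htm hkm with h | h | h <;>
          simp [eps_apply, Pi.add_apply, Pi.sub_apply, htk, htm, hkm,
            Ne.symm htk, Ne.symm htm, Ne.symm hkm] at h
    · -- pair + eps t
      have hsum := phi_sum_le hmem
      rw [sum_add', sum_eps, spair] at hsum; omega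
    · -- pair + pair
      have hsum := phi_sum_le hmem
      rw [sum_add', spair, spair] at hsum; omega
    · -- pair + minus
      have hijv : i.val < j.val := hij
      have him : i ≠ m := Fin.ne_of_val_ne (by simp [hm]; omega)
      have hjm : j ≠ m := Fin.ne_of_val_ne (by simp [hm]; omega)
      have hkm : k ≠ m := Fin.ne_of_val_ne (by simp [hm]; omega)
      rcases phi_supp hmem hij.ne him hjm with h | h | h <;>
        simp [eps_apply, Pi.add_apply, Pi.sub_apply, hij.ne, hij.ne', him, hjm, hkm,
          Ne.symm him, Ne.symm hjm, Ne.symm hkm] at h <;>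
        split_ifs at h <;> omega
    · -- minus + eps t
      rw [add_comm] at hmem
      have htm : t ≠ m := by
        intro h; rw [h] at ht; simp [hm] at ht
      have him : i ≠ m := by
        intro h; rw [h] at hi; simp [hm] at hi
      by_cases hti : t = i
      · subst hti
        have := (phi_coord hmem t).2
        simp [eps_apply, Pi.add_apply, Pi.sub_apply, htm] at this
      · rcases phi_supp hmem hti htm him with h | h | h <;>
          simp [eps_apply, Pi.add_apply, Pi.sub_apply, hti, htm, him,
            Ne.symm hti, Ne.symm htm, Ne.symm him] at h
    · -- minus + pair
      rw [add_comm] at hmem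
      have hklv : k.val < l.val := hkl
      have hkm : k ≠ m := Fin.ne_of_val_ne (by simp [hm]; omega)
      have hlm : l ≠ m := Fin.ne_of_val_ne (by simp [hm]; omega)
      have him : i ≠ m := Fin.ne_of_val_ne (by simp [hm]; omega)
      rcases phi_supp hmem hkl.ne hkm hlm with h | h | h <;>
        simp [eps_apply, Pi.add_apply, Pi.sub_apply, hkl.ne, hkl.ne', hkm, hlm, him,
          Ne.symm hkm, Ne.symm hlm, Ne.symm him] at h <;>
        split_ifs at h <;> omega
    · -- minus + minus
      have him : i ≠ m := by
        intro h; rw [h] at hi; simp [hm] at hi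
      have hkm : k ≠ m := by
        intro h; rw [h] at hk; simp [hm] at hk
      have := (phi_coord hmem m).1
      simp [eps_apply, Pi.add_apply, Pi.sub_apply, Ne.symm him, Ne.symm hkm] at this
  · -- Sstar ncard
    set A : Finset (Fin n → ℤ) := ((Finset.univ : Finset (Fin n × Fin n)).filter
        (fun p => p.1 < p.2 ∧ p.2.val < n - 1)).image (fun p => eps n p.1 + eps n p.2) with hA
    set B : Finset (Fin n → ℤ) := ((Finset.univ : Finset (Fin n)).filter
        (fun i => i.val < n - 1)).image (fun i => eps n i - eps n m) with hB
    have hmA : ∀ x ∈ A, ∑ k, x k = 2 := by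
      intro x hx
      rcases Finset.mem_image.1 hx with ⟨p, -, rfl⟩
      exact spair p.1 p.2
    have hmB : ∀ x ∈ B, x m = -1 := by
      intro x hx
      rcases Finset.mem_image.1 hx with ⟨i, hi, rfl⟩
      rw [Finset.mem_filter] at hi
      have him : m ≠ i := Fin.ne_of_val_ne (by simp [hm]; omega)
      simp [eps_apply, Pi.sub_apply, him]
    have hmA' : ∀ x ∈ A, x m = 0 := by
      intro x hx
      rcases Finset.mem_image.1 hx with ⟨p, hp, rfl⟩
      rw [Finset.mem_filter] at hp
      have h1 : p.1.val < p.2.val := hp.2.1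
      have hm1 : m ≠ p.1 := Fin.ne_of_val_ne (by simp [hm]; omega)
      have hm2 : m ≠ p.2 := Fin.ne_of_val_ne (by simp [hm]; omega)
      simp [eps_apply, Pi.add_apply, hm1, hm2]
    have hSeq : Sstar n hn t = ↑(insert (eps n t) (A ∪ B)) := by
      ext x
      rw [hmem_Sstar]
      simp only [Finset.coe_insert, Set.mem_insert_iff, Finset.coe_union, Set.mem_union,
        Finset.coe_image, Set.mem_image, Finset.mem_coe, Finset.mem_filter, Finset.mem_univ,
        true_and, hA, hB]
      constructor
      · rintro (rfl | ⟨i, j, hij, hjv, rfl⟩ | ⟨i, hi, rfl⟩)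
        · exact Or.inl rfl
        · exact Or.inr (Or.inl ⟨(i, j), ⟨hij, hjv⟩, rfl⟩)
        · exact Or.inr (Or.inr ⟨i, hi, rfl⟩)
      · rintro (rfl | ⟨⟨i, j⟩, ⟨hij, hjv⟩, rfl⟩ | ⟨i, hi, rfl⟩)
        · exact Or.inl rfl
        · exact Or.inr (Or.inl ⟨i, j, hij, hjv, rfl⟩)
        · exact Or.inr (Or.inr ⟨i, hi, rfl⟩)
    rw [hSeq, Set.ncard_coe_finset]
    have hdisj : Disjoint A B := by
      rw [Finset.disjoint_left]
      intro x hxA hxB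
      have := hmA' x hxA
      rw [hmB x hxB] at this
      omega
    have htnotin : eps n t ∉ A ∪ B := by
      intro hmem
      rcases Finset.mem_union.1 hmem with h | h
      · have := hmA _ h
        rw [sum_eps] at this
        omega
      · have := hmB _ h
        have htm : t ≠ m := by
          intro h'; rw [h'] at ht; simp [hm] at ht
        rw [eps_apply, if_neg (Ne.symm htm)] at this
        omega
    have hAcard : A.card = (n-1) * (n-1-1) / 2 := by
      rw [hA, Finset.card_image_of_injOn, pairsCard n (n-1) (by omega)]
      intro p hp q hq heq
      simp only [Finset.coe_filter, Set.mem_setOf_eq] at hp hq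
      obtain ⟨h1, h2⟩ := eps_pair_inj hp.2.1 hq.2.1 heq
      exact Prod.ext h1 h2
    have hBcard : B.card = n - 1 := by
      rw [hB, Finset.card_image_of_injOn]
      · have : (Finset.univ : Finset (Fin n)).filter (fun i => i.val < n - 1)
            = Finset.Iio m := by
          ext i; simp [Finset.mem_Iio, Fin.lt_def, hm]
        rw [this, Fin.card_Iio]
      · intro i hi j hj heq
        simp only [Finset.coe_filter, Set.mem_setOf_eq] at hi hj
        have h1 := congrFun heq i
        have him : i ≠ m := Fin.ne_of_val_ne (by simp [hm]; omega)
        have hjm : j ≠ m := Fin.ne_of_val_ne (by simp [hm]; omega)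
        by_contra hne
        simp [eps_apply, Pi.sub_apply, him, hne] at h1
    rw [Finset.card_insert_of_notMem htnotin, Finset.card_union_of_disjoint hdisj,
      hAcard, hBcard]
    have key : n * (n - 1) = (n - 1) * (n - 1 - 1) + 2 * (n - 1) := by
      obtain ⟨p, rfl⟩ : ∃ p, n = p + 2 := ⟨n - 2, by omega⟩
      have h1 : p + 2 - 1 = p + 1 := by omega
      have h2 : p + 1 - 1 = p := by omega
      rw [h1, h2]; ring
    omega

end TypeB
end
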